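/- arXiv:1202.4853 — 3 statements merged into one kernel-verified Lean document; each statement's English description precedes it below -/
import Mathlib

section
/- Let ν ≥ 1/2 be real. Then for all x > 0, the Turánian of the modified Bessel function of the first kind satisfies the upper bound I_ν(x)² − I_{ν−1}(x)·I_{ν+1}(x) < I_ν(x)² / √(x² + ν² − 1/4). -/
open Real

/-- The modified Bessel function of the first kind of real order `ν`,
`I_ν(x) = ∑_{n≥0} (x/2)^(2n+ν) / (n! Γ(n+ν+1))`. -/
noncomputable def besselI (ν x : ℝ) : ℝ :=
  ∑' n : ℕ, (x / 2) ^ (2 * (n : ℝ) + ν) / ((n.factorial : ℝ) * Real.Gamma ((n : ℝ) + ν + 1))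

/-- The modified Bessel function of the second kind of real order `ν`,
`K_ν(x) = ∫_0^∞ e^{-x cosh t} cosh(ν t) dt`. -/
noncomputable def besselK (ν x : ℝ) : ℝ :=
  ∫ t in Set.Ioi (0 : ℝ), Real.exp (-x * Real.cosh t) * Real.cosh (ν * t)

open Filter

noncomputable def bT (μ : ℝ) (n : ℕ) (x : ℝ) : ℝ :=
  (x / 2) ^ (2 * (n : ℝ) + μ) / ((n.factorial : ℝ) * Real.Gamma ((n : ℝ) + μ + 1))

lemma besselI_eq (μ x : ℝ) : besselI μ x = ∑' n, bT μ n x := rfl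

lemma bGamma_pos {μ : ℝ} (hμ : -1 < μ) (n : ℕ) : 0 < Real.Gamma ((n : ℝ) + μ + 1) := by
  apply Real.Gamma_pos_of_pos
  have : (0:ℝ) ≤ n := Nat.cast_nonneg n
  linarith

lemma bden_pos {μ : ℝ} (hμ : -1 < μ) (n : ℕ) :
    0 < ((n.factorial : ℝ) * Real.Gamma ((n : ℝ) + μ + 1)) :=
  mul_pos (by positivity) (bGamma_pos hμ n)

lemma bT_pos {μ x : ℝ} (hμ : -1 < μ) (hx : 0 < x) (n : ℕ) : 0 < bT μ n x :=
  div_pos (Real.rpow_pos_of_pos (by linarith) _) (bden_pos hμ n)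

lemma bT_succ {μ x : ℝ} (hμ : -1 < μ) (hx : 0 < x) (n : ℕ) :
    bT μ (n + 1) x = bT μ n x * ((x / 2) ^ (2:ℕ) / (((n : ℝ) + 1) * ((n : ℝ) + μ + 1))) := by
  have hx2 : (0:ℝ) < x / 2 := by linarith
  have hn : (0:ℝ) ≤ n := Nat.cast_nonneg n
  simp only [bT, Nat.cast_succ, Nat.factorial_succ, Nat.cast_mul]
  have hpow : (x / 2) ^ (2 * ((n : ℝ)+1) + μ) = (x / 2) ^ (2 * (n : ℝ) + μ) * (x/2)^(2:ℕ) := by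
    rw [show 2 * ((n : ℝ) + 1) + μ = (2 * (n : ℝ) + μ) + (2:ℕ) by push_cast; ring,
      Real.rpow_add hx2, Real.rpow_natCast]
  have hΓ : Real.Gamma ((n:ℝ) + 1 + μ + 1) = ((n:ℝ) + μ + 1) * Real.Gamma ((n:ℝ) + μ + 1) := by
    rw [show (n:ℝ) + 1 + μ + 1 = ((n:ℝ) + μ + 1) + 1 by ring, Real.Gamma_add_one (by intro h; linarith [hn])]
  rw [hpow, hΓ]
  have h1 : ((n:ℝ) + μ + 1) ≠ 0 := by intro h; linarith
  have h2 : Real.Gamma ((n:ℝ) + μ + 1) ≠ 0 := ne_of_gt (bGamma_pos hμ n)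
  have h3 : ((n.factorial : ℝ)) ≠ 0 := by positivity
  field_simp

lemma summable_bT {μ x : ℝ} (hμ : -1 < μ) (hx : 0 < x) : Summable (fun n => bT μ n x) := by
  apply summable_of_ratio_norm_eventually_le (r := 1/2) (by norm_num)
  filter_upwards [eventually_ge_atTop ⌈2 * (x/2)^2⌉₊] with n hn
  have hn' : 2 * (x/2)^2 ≤ (n:ℝ) := le_trans (Nat.le_ceil _) (Nat.cast_le.mpr hn)
  have h0 : (0:ℝ) ≤ n := Nat.cast_nonneg n
  have h1 : 0 < (n:ℝ) + μ + 1 := by linarith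
  have hb := bT_pos hμ hx n
  rw [Real.norm_of_nonneg (le_of_lt (bT_pos hμ hx (n+1))), Real.norm_of_nonneg hb.le,
    bT_succ hμ hx n]
  rw [mul_comm (1/2) (bT μ n x)]
  apply mul_le_mul_of_nonneg_left _ hb.le
  rw [div_le_iff₀ (by positivity)]
  nlinarith [sq_nonneg (x/2), h0, h1]

lemma summable_nmul_bT {μ x : ℝ} (hμ : -1 < μ) (hx : 0 < x) :
    Summable (fun n : ℕ => (n:ℝ) * bT μ n x) := by
  apply summable_of_ratio_norm_eventually_le (r := 1/2) (by norm_num)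
  filter_upwards [eventually_ge_atTop ⌈8 * (x/2)^2⌉₊, eventually_ge_atTop ⌈-2*μ⌉₊,
    eventually_ge_atTop 1] with n hn hn2 hn3
  have hn' : 8 * (x/2)^2 ≤ (n:ℝ) := le_trans (Nat.le_ceil _) (Nat.cast_le.mpr hn)
  have hn2' : -2*μ ≤ (n:ℝ) := le_trans (Nat.le_ceil _) (Nat.cast_le.mpr hn2)
  have hn3' : (1:ℝ) ≤ (n:ℝ) := by exact_mod_cast hn3
  have h1 : 0 < (n:ℝ) + μ + 1 := by linarith
  have hb := bT_pos hμ hx n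
  have hb1 := bT_pos hμ hx (n+1)
  rw [Real.norm_of_nonneg (by positivity), Real.norm_of_nonneg (by positivity),
    bT_succ hμ hx n]
  push_cast
  rw [show ((n:ℝ)+1) * (bT μ n x * ((x / 2) ^ (2:ℕ) / (((n:ℝ) + 1) * ((n:ℝ) + μ + 1))))
      = bT μ n x * ((x/2)^(2:ℕ) / ((n:ℝ) + μ + 1)) by field_simp,
    show (1/2) * ((n:ℝ) * bT μ n x) = bT μ n x * ((n:ℝ)/2) by ring]
  apply mul_le_mul_of_nonneg_left _ hb.le
  rw [div_le_div_iff₀ (by linarith) (by norm_num)]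
  nlinarith [sq_nonneg (x/2)]

lemma besselI_pos {μ x : ℝ} (hμ : -1 < μ) (hx : 0 < x) : 0 < besselI μ x := by
  rw [besselI_eq]
  exact Summable.tsum_pos (summable_bT hμ hx) (fun n => (bT_pos hμ hx n).le) 0 (bT_pos hμ hx 0)

lemma summable_linear_bT {μ x : ℝ} (c : ℝ) (hμ : -1 < μ) (hx : 0 < x) :
    Summable (fun n : ℕ => (2*(n:ℝ)+c) * bT μ n x) := by
  have h := ((summable_nmul_bT hμ hx).mul_left 2).add ((summable_bT hμ hx).mul_left c)
  apply h.congr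
  intro n; ring

lemma hasDerivAt_bT {μ x : ℝ} (hμ : -1 < μ) (hx : 0 < x) (n : ℕ) :
    HasDerivAt (fun y => bT μ n y) ((2*(n:ℝ)+μ)/x * bT μ n x) x := by
  have hx2 : x/2 ≠ 0 := by positivity
  have h1 : HasDerivAt (fun y : ℝ => y/2) (1/2) x := (hasDerivAt_id x).div_const 2
  have h2 := (h1.rpow_const (p := 2*(n:ℝ)+μ) (Or.inl hx2)).div_const
    ((n.factorial : ℝ) * Real.Gamma ((n : ℝ) + μ + 1))
  refine h2.congr_deriv ?_
  rw [show (2*(n:ℝ)+μ) - 1 = (2*(n:ℝ)+μ) + (-1) by ring, Real.rpow_add (by positivity),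
    Real.rpow_neg_one]
  unfold bT
  field_simp

lemma tsum_shift_bT {μ x : ℝ} (hμ : -1 < μ) (hx : 0 < x) :
    ∑' n : ℕ, (2*(n:ℝ)/x) * bT μ n x = besselI (μ+1) x := by
  have hs : Summable (fun n : ℕ => (2*(n:ℝ)/x) * bT μ n x) := by
    have := (summable_linear_bT 0 hμ hx).mul_left (1/x)
    apply this.congr; intro n; simp; ring
  rw [Summable.tsum_eq_zero_add hs]
  simp only [Nat.cast_zero, mul_zero, zero_mul, zero_div, zero_add, besselI_eq]
  apply tsum_congr
  intro n
  have hx2 : (0:ℝ) < x / 2 := by linarith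
  have hΓeq : ((n:ℝ)+1) + μ + 1 = (n:ℝ) + (μ+1) + 1 := by ring
  unfold bT
  push_cast
  rw [hΓeq, show 2 * ((n:ℝ)+1) + μ = (2*(n:ℝ) + (μ+1)) + 1 by ring,
    Real.rpow_add hx2, Real.rpow_one, Nat.factorial_succ]
  push_cast
  have hf : ((n.factorial : ℝ)) ≠ 0 := by positivity
  have hΓ : Real.Gamma ((n:ℝ) + (μ+1) + 1) ≠ 0 := by
    have : -1 < μ + 1 := by linarith
    exact ne_of_gt (bGamma_pos this n)
  field_simp

lemma bT_le_endpoints {μ : ℝ} (hμ : -1 < μ) (n : ℕ) {a b y : ℝ} (ha : 0 < a) (hay : a ≤ y)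
    (hyb : y ≤ b) : bT μ n y ≤ bT μ n a + bT μ n b := by
  have hy : 0 < y := lt_of_lt_of_le ha hay
  have hb : 0 < b := lt_of_lt_of_le hy hyb
  have hden := bden_pos (μ := μ) hμ n
  have key : (y/2) ^ (2*(n:ℝ)+μ) ≤ (a/2) ^ (2*(n:ℝ)+μ) + (b/2) ^ (2*(n:ℝ)+μ) := by
    rcases le_or_gt 0 (2*(n:ℝ)+μ) with hp | hp
    · have : (y/2) ^ (2*(n:ℝ)+μ) ≤ (b/2) ^ (2*(n:ℝ)+μ) :=
        Real.rpow_le_rpow (by positivity) (by linarith) hp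
      have ha' : 0 < (a/2) ^ (2*(n:ℝ)+μ) := Real.rpow_pos_of_pos (by linarith) _
      linarith
    · have : (y/2) ^ (2*(n:ℝ)+μ) ≤ (a/2) ^ (2*(n:ℝ)+μ) :=
        Real.rpow_le_rpow_of_nonpos (by positivity) (by linarith) hp.le
      have hb' : 0 < (b/2) ^ (2*(n:ℝ)+μ) := Real.rpow_pos_of_pos (by linarith) _
      linarith
  unfold bT
  rw [← add_div]
  exact (div_le_div_iff_of_pos_right hden).mpr key

lemma hasDerivAt_besselI {μ x : ℝ} (hμ : -1 < μ) (hx : 0 < x) :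
    HasDerivAt (besselI μ) (besselI (μ+1) x + μ/x * besselI μ x) x := by
  have ha : (0:ℝ) < x/2 := by linarith
  have hb : x < 2*x+1 := by linarith
  have key : HasDerivAt (fun z => ∑' n : ℕ, bT μ n z)
      (∑' n : ℕ, (2*(n:ℝ)+μ)/x * bT μ n x) x := by
    apply hasDerivAt_tsum_of_isPreconnected
      (u := fun n : ℕ => (2*(n:ℝ)+1+|μ|) * ((x/2)⁻¹ * (bT μ n (x/2) + bT μ n (2*x+1))))
      (t := Set.Ioo (x/2) (2*x+1))
      (g' := fun (n : ℕ) (y : ℝ) => (2*(n:ℝ)+μ)/y * bT μ n y)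
    · have h1 := summable_linear_bT (1+|μ|) hμ ha
      have h2 := summable_linear_bT (1+|μ|) hμ (by linarith : (0:ℝ) < 2*x+1)
      have := (h1.add h2).mul_left (x/2)⁻¹
      apply this.congr
      intro n; ring
    · exact isOpen_Ioo
    · exact (convex_Ioo _ _).isPreconnected
    · intro n y hy
      have hy0 : 0 < y := lt_trans ha hy.1
      exact hasDerivAt_bT hμ hy0 n
    · intro n y hy
      have hy0 : 0 < y := lt_trans ha hy.1
      have hbT : 0 < bT μ n y := bT_pos hμ hy0 n
      have h1 : |2*(n:ℝ)+μ| ≤ 2*(n:ℝ)+1+|μ| := by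
        refine (abs_add_le _ _).trans ?_
        rw [abs_of_nonneg (by positivity : (0:ℝ) ≤ 2*(n:ℝ))]
        linarith
      have h2 : bT μ n y ≤ bT μ n (x/2) + bT μ n (2*x+1) :=
        bT_le_endpoints hμ n ha hy.1.le hy.2.le
      have h3 : y⁻¹ ≤ (x/2)⁻¹ := by
        apply inv_anti₀ ha hy.1.le
      rw [Real.norm_eq_abs, abs_mul, abs_div, abs_of_pos hy0, abs_of_pos hbT,
        div_eq_mul_inv, ← mul_assoc]
      exact mul_le_mul (mul_le_mul h1 h3 (by positivity) (by positivity)) h2 hbT.le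
        (by positivity)
    · exact ⟨by linarith, hb⟩
    · exact summable_bT hμ hx
    · exact ⟨by linarith, hb⟩
  have hs1 : Summable (fun n : ℕ => (2*(n:ℝ)/x) * bT μ n x) := by
    have := (summable_linear_bT 0 hμ hx).mul_left (1/x)
    apply this.congr; intro n; ring
  have hs2 : Summable (fun n : ℕ => (μ/x) * bT μ n x) := (summable_bT hμ hx).mul_left _
  have heq : (fun n : ℕ => (2*(n:ℝ)+μ)/x * bT μ n x)
      = fun n : ℕ => (2*(n:ℝ)/x) * bT μ n x + (μ/x) * bT μ n x := funext fun n => by ring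
  have hsum : ∑' n : ℕ, (2*(n:ℝ)+μ)/x * bT μ n x
      = besselI (μ+1) x + μ/x * besselI μ x := by
    rw [heq, Summable.tsum_add hs1 hs2, tsum_shift_bT hμ hx, tsum_mul_left, ← besselI_eq]
  exact hsum ▸ key

lemma besselI_rec {μ x : ℝ} (hμ : 0 < μ) (hx : 0 < x) :
    besselI (μ-1) x = besselI (μ+1) x + (2*μ/x) * besselI μ x := by
  have hμ' : -1 < μ := by linarith
  have hs1 : Summable (fun n : ℕ => (2*(n:ℝ)/x) * bT μ n x) := by
    have := (summable_linear_bT 0 hμ' hx).mul_left (1/x)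
    apply this.congr; intro n; ring
  have hs2 : Summable (fun n : ℕ => (2*μ/x) * bT μ n x) := (summable_bT hμ' hx).mul_left _
  have key : ∀ n : ℕ, bT (μ-1) n x = (2*(n:ℝ)/x) * bT μ n x + (2*μ/x) * bT μ n x := by
    intro n
    have hx2 : (0:ℝ) < x / 2 := by linarith
    have hn : (0:ℝ) ≤ n := Nat.cast_nonneg n
    have hΓ : Real.Gamma ((n:ℝ) + μ + 1) = ((n:ℝ) + μ) * Real.Gamma ((n:ℝ) + μ) := by
      rw [show (n:ℝ) + μ + 1 = ((n:ℝ) + μ) + 1 by ring,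
        Real.Gamma_add_one (by positivity)]
    unfold bT
    have hpow : (x/2)^(2*(n:ℝ) + μ) = (x/2)^(2*(n:ℝ)+(μ-1)) * (x/2) := by
      rw [show 2*(n:ℝ)+μ = (2*(n:ℝ)+(μ-1)) + 1 by ring, Real.rpow_add hx2, Real.rpow_one]
    rw [hpow, show (n:ℝ) + (μ-1) + 1 = (n:ℝ) + μ by ring, hΓ]
    have h1 : ((n:ℝ) + μ) ≠ 0 := by positivity
    have h2 : Real.Gamma ((n:ℝ) + μ) ≠ 0 := by
      apply ne_of_gt; apply Real.Gamma_pos_of_pos; positivity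
    have h3 : ((n.factorial : ℝ)) ≠ 0 := by positivity
    field_simp
  rw [besselI_eq, tsum_congr key, Summable.tsum_add hs1 hs2, tsum_shift_bT hμ' hx, tsum_mul_left,
    ← besselI_eq]

lemma besselI_le_of_le_one {μ x : ℝ} (hμ : -1 < μ) (hx : 0 < x) (hx1 : x ≤ 1) :
    besselI μ x ≤ x ^ μ * besselI μ 1 := by
  rw [besselI_eq, besselI_eq, ← tsum_mul_left]
  apply Summable.tsum_le_tsum _ (summable_bT hμ hx) ((summable_bT hμ one_pos).mul_left _)
  intro n
  unfold bT
  rw [← mul_div_assoc]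
  apply (div_le_div_iff_of_pos_right (bden_pos hμ n)).mpr
  rw [show x/2 = x*(1/2) by ring, Real.mul_rpow hx.le (by norm_num : (0:ℝ) ≤ 1/2),
    Real.rpow_add hx (2*(n:ℝ)) μ]
  have hle := Real.rpow_le_one hx.le hx1 (by positivity : (0:ℝ) ≤ 2*(n:ℝ))
  nlinarith [mul_nonneg (sub_nonneg.mpr hle) (mul_nonneg (Real.rpow_nonneg hx.le μ)
    (Real.rpow_nonneg (by norm_num : (0:ℝ) ≤ 1/2) (2*(n:ℝ)+μ)))]


lemma besselI_tendsto_zero {μ : ℝ} (hμ : 0 < μ) :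
    Filter.Tendsto (besselI μ) (nhdsWithin 0 (Set.Ioi 0)) (nhds 0) := by
  have hμ' : -1 < μ := by linarith
  have hg : Filter.Tendsto (fun y : ℝ => y ^ μ * besselI μ 1) (nhdsWithin 0 (Set.Ioi 0))
      (nhds 0) := by
    have h0 : Filter.Tendsto (fun y : ℝ => y ^ μ) (nhdsWithin 0 (Set.Ioi 0)) (nhds 0) := by
      have := (Real.continuousAt_rpow_const 0 μ (Or.inr hμ.le)).continuousWithinAt
        (s := Set.Ioi (0:ℝ))
      simpa [ContinuousWithinAt, Real.zero_rpow (ne_of_gt hμ)] using this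
    simpa using h0.mul_const (besselI μ 1)
  apply squeeze_zero' _ _ hg
  · filter_upwards [self_mem_nhdsWithin] with y hy
    exact (besselI_pos hμ' hy).le
  · filter_upwards [Ioc_mem_nhdsGT_of_mem (Set.mem_Ico.mpr ⟨le_refl 0, zero_lt_one⟩)] with y hy
    exact besselI_le_of_le_one hμ' hy.1 hy.2

noncomputable def sfun (c y : ℝ) : ℝ := Real.sqrt (y^2 + c)
noncomputable def gfun (ν y : ℝ) : ℝ := y^2 + ν^2 - y^2 / sfun (ν^2 - 1/4) y
noncomputable def phif (ν y : ℝ) : ℝ := Real.sqrt (gfun ν y)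
noncomputable def DIf (ν y : ℝ) : ℝ := besselI (ν+1) y + ν/y * besselI ν y
noncomputable def dgf (c y : ℝ) : ℝ := 2*y - 2*y/sfun c y + y^3/(sfun c y)^3
noncomputable def Vf (ν y : ℝ) : ℝ :=
  y * besselI ν y * DIf ν y - phif ν y * (besselI ν y)^2
noncomputable def VDraw (ν y : ℝ) : ℝ :=
  besselI ν y * DIf ν y + y * DIf ν y * DIf ν y +
    y * besselI ν y * (besselI ν y - DIf ν y / y + ν^2/y^2 * besselI ν y) -
    (dgf (ν^2-1/4) y / (2 * phif ν y) * (besselI ν y)^2 +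
      phif ν y * (2 * besselI ν y * DIf ν y))

section core
variable {ν y : ℝ}

lemma c_pos (hν : 1/2 < ν) : 0 < ν^2 - 1/4 := by nlinarith

lemma sfun_pos {c : ℝ} (hc : 0 < c) (y : ℝ) : 0 < sfun c y :=
  Real.sqrt_pos.mpr (by positivity)

lemma sfun_sq {c : ℝ} (hc : 0 < c) (y : ℝ) : (sfun c y)^2 = y^2 + c :=
  Real.sq_sqrt (by positivity)

lemma hasDerivAt_sfun {c : ℝ} (hc : 0 < c) (y : ℝ) :
    HasDerivAt (sfun c) (y / sfun c y) y := by
  have h1 : HasDerivAt (fun y : ℝ => y^2 + c) (2*y) y := by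
    simpa using ((hasDerivAt_pow 2 y).add_const c)
  have h2 := (Real.hasDerivAt_sqrt (by positivity : y^2 + c ≠ 0)).comp y h1
  refine h2.congr_deriv ?_
  unfold sfun
  field_simp

lemma gfun_pos (hν : 1/2 < ν) (hy : 0 < y) : 0 < gfun ν y := by
  have hc := c_pos hν
  have hs := sfun_pos hc y
  have hs2 := sfun_sq hc y
  unfold gfun
  rw [sub_pos, div_lt_iff₀ hs]
  nlinarith [sq_nonneg (sfun (ν^2-1/4) y - 1/2)]

lemma phif_pos (hν : 1/2 < ν) (hy : 0 < y) : 0 < phif ν y :=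
  Real.sqrt_pos.mpr (gfun_pos hν hy)

lemma phif_sq (hν : 1/2 < ν) (hy : 0 < y) : (phif ν y)^2 = gfun ν y :=
  Real.sq_sqrt (gfun_pos hν hy).le

lemma phif_rel (hν : 1/2 < ν) (hy : 0 < y) :
    (y^2 + ν^2 - (phif ν y)^2) * sfun (ν^2-1/4) y = y^2 := by
  have hc := c_pos hν
  have hs := (sfun_pos hc y).ne'
  rw [phif_sq hν hy]
  unfold gfun
  set s := sfun (ν^2-1/4) y with hsdef
  field_simp
  ring

lemma hasDerivAt_gfun (hν : 1/2 < ν) (hy : 0 < y) :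
    HasDerivAt (gfun ν) (dgf (ν^2-1/4) y) y := by
  have hc := c_pos hν
  have hs := sfun_pos hc y
  have h1 : HasDerivAt (fun y : ℝ => y^2 + ν^2) (2*y) y := by
    simpa using ((hasDerivAt_pow 2 y).add_const (ν^2))
  have h2 : HasDerivAt (fun y : ℝ => y^2) (2*y) y := by simpa using hasDerivAt_pow 2 y
  have h3 := h2.div (hasDerivAt_sfun hc y) hs.ne'
  have htot := h1.sub h3
  refine htot.congr_deriv ?_
  unfold dgf
  have hs2 := sfun_sq hc y
  set s := sfun (ν^2-1/4) y with hsdef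
  field_simp
  ring

lemma hasDerivAt_phif (hν : 1/2 < ν) (hy : 0 < y) :
    HasDerivAt (phif ν) (dgf (ν^2-1/4) y / (2 * phif ν y)) y := by
  have h := (Real.hasDerivAt_sqrt (gfun_pos hν hy).ne').comp y (hasDerivAt_gfun hν hy)
  refine h.congr_deriv ?_
  unfold phif
  ring

lemma hasDerivAt_DIf (hν : (0:ℝ) < ν) (hy : 0 < y) :
    HasDerivAt (DIf ν) (besselI ν y - DIf ν y / y + ν^2/y^2 * besselI ν y) y := by
  have hν1 : (-1:ℝ) < ν := by linarith
  have hν2 : (-1:ℝ) < ν + 1 := by linarith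
  have h1 : HasDerivAt (besselI (ν+1))
      (besselI (ν+2) y + (ν+1)/y * besselI (ν+1) y) y := by
    have := hasDerivAt_besselI hν2 hy
    rwa [show ν+1+1 = ν+2 by ring] at this
  have h2 : HasDerivAt (fun y : ℝ => ν/y) (-(ν/y^2)) y := by
    have := (hasDerivAt_inv hy.ne').const_mul ν
    simpa [div_eq_mul_inv, neg_div] using this
  have h3 : HasDerivAt (besselI ν) (DIf ν y) y := hasDerivAt_besselI hν1 hy
  have htot := h1.add (h2.mul h3)
  have hrec : besselI ν y = besselI (ν+2) y + (2*(ν+1)/y) * besselI (ν+1) y := by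
    have := besselI_rec (show (0:ℝ) < ν + 1 by linarith) hy
    rwa [show ν+1-1 = ν by ring, show ν+1+1 = ν+2 by ring] at this
  have heq : besselI (ν+2) y + (ν+1)/y * besselI (ν+1) y +
      (-(ν/y^2) * besselI ν y + ν/y * DIf ν y)
      = besselI ν y - DIf ν y / y + ν^2/y^2 * besselI ν y := by
    unfold DIf
    rw [hrec]
    field_simp
    ring
  exact heq ▸ htot

lemma hasDerivAt_Vf (hν : 1/2 < ν) (hy : 0 < y) :
    HasDerivAt (Vf ν) (VDraw ν y) y := by
  have hν1 : (-1:ℝ) < ν := by linarith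
  have hI : HasDerivAt (besselI ν) (DIf ν y) y := hasDerivAt_besselI hν1 hy
  have h1 : HasDerivAt (fun z => z * besselI ν z * DIf ν z)
      (besselI ν y * DIf ν y + y * DIf ν y * DIf ν y +
        y * besselI ν y * (besselI ν y - DIf ν y / y + ν^2/y^2 * besselI ν y)) y := by
    have := ((hasDerivAt_id y).mul hI).mul
      (hasDerivAt_DIf (ν := ν) (show (0:ℝ) < ν by linarith) hy)
    refine this.congr_deriv ?_
    simp only [Pi.mul_apply, id_eq]
    field_simp
  have h2 : HasDerivAt (fun z => phif ν z * (besselI ν z)^2)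
      (dgf (ν^2-1/4) y / (2 * phif ν y) * (besselI ν y)^2 +
        phif ν y * (2 * besselI ν y * DIf ν y)) y := by
    have := (hasDerivAt_phif hν hy).mul (hI.pow 2)
    refine this.congr_deriv ?_
    simp only [Pi.pow_apply]
    ring
  exact h1.sub h2

end core
section core2
variable {ν y : ℝ}

set_option maxHeartbeats 1000000 in
lemma VDalg (I DI p s y nu dg : ℝ) (hy : y ≠ 0) (hp : p ≠ 0) (hs : s ≠ 0)
    (hrel : p^2*s = (y^2+nu^2)*s - y^2)
    (hdg : dg = 2*y - 2*y/s + y^3/s^3) :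
    (I*DI + y*DI*DI + y*I*(I - DI/y + nu^2/y^2*I) - (dg/(2*p)*I^2 + p*(2*I*DI)))
      * (2*p*s^3*y^2)
    = 2*p*s^3*y*(y*DI - p*I)^2 + y^3*I^2*(2*p*s^2 + 2*s^2 - 2*s^3 - y^2) := by
  subst hdg
  field_simp
  linear_combination (-(2*p*s^2*I^2)) * hrel

set_option maxHeartbeats 1000000 in
lemma VDraw_pos (hν : 1/2 < ν) (hy : 0 < y) : 0 < VDraw ν y := by
  have hc := c_pos hν
  have hs0 := sfun_pos hc y
  have hφ0 := phif_pos hν hy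
  have hI0 := besselI_pos (by linarith : (-1:ℝ) < ν) hy
  have hs2 := sfun_sq hc y
  have hrel' := phif_rel hν hy
  unfold VDraw dgf
  generalize hsg : sfun (ν^2-1/4) y = s at hs0 hs2 hrel' ⊢
  generalize hpg : phif ν y = p at hφ0 hrel' ⊢
  generalize hIg : besselI ν y = I at hI0 ⊢
  generalize hDg : DIf ν y = DI
  have hrel : p^2*s = (y^2+ν^2)*s - y^2 := by linarith [hrel']
  have hE : 0 < 2*p*s^2 + 2*s^2 - 2*s^3 - y^2 := by
    rcases le_or_gt (2*s^3 - s^2 - (ν^2-1/4)) 0 with hK | hK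
    · nlinarith [mul_pos hφ0 (mul_pos hs0 hs0)]
    · have hs12 : 1/2 < s := by nlinarith
      have h1 : (2*p*s^2)^2 = 4*s^3*((y^2+ν^2)*s - y^2) := by
        linear_combination (4*s^3) * hrel
      have h8 : 0 < 8*s^3 - 2*s^2 - (ν^2-1/4) := by nlinarith
      have hdiff : (2*p*s^2)^2 - (2*s^3 - s^2 - (ν^2-1/4))^2
          = (ν^2-1/4)*(8*s^3-2*s^2-(ν^2-1/4)) := by
        linear_combination h1 + (4*s^3-4*s^4)*hs2
      have hKlt : 2*s^3 - s^2 - (ν^2-1/4) < 2*p*s^2 := by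
        nlinarith [mul_pos hc h8, mul_pos hφ0 (mul_pos hs0 hs0)]
      nlinarith [hKlt, hs2]
  have halg := VDalg I DI p s y ν (2*y - 2*y/s + y^3/s^3) hy.ne' hφ0.ne' hs0.ne' hrel rfl
  have hM : 0 < 2*p*s^3*y^2 := by positivity
  have hA : 0 ≤ 2*p*s^3*y*(y*DI - p*I)^2 := by positivity
  have hB : 0 < y^3*I^2*(2*p*s^2 + 2*s^2 - 2*s^3 - y^2) :=
    mul_pos (mul_pos (pow_pos hy 3) (pow_pos hI0 2)) hE
  nlinarith [halg, hM, hA, hB]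

end core2
section vf
variable {ν x : ℝ}

lemma Vf_strictMono (hν : 1/2 < ν) : StrictMonoOn (Vf ν) (Set.Ioi 0) := by
  apply strictMonoOn_of_deriv_pos (convex_Ioi 0)
  · intro y hy
    exact (hasDerivAt_Vf hν hy).continuousAt.continuousWithinAt
  · intro y hy
    rw [interior_Ioi] at hy
    rw [(hasDerivAt_Vf hν hy).deriv]
    exact VDraw_pos hν hy

lemma Vf_eventuallyEq (hν : 1/2 < ν) :
    Vf ν =ᶠ[nhdsWithin 0 (Set.Ioi 0)]
      fun y => y * besselI ν y * besselI (ν+1) y + (ν - phif ν y) * (besselI ν y)^2 := by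
  filter_upwards [self_mem_nhdsWithin] with y hy
  have hy0 : (0:ℝ) < y := hy
  unfold Vf DIf
  field_simp
  ring

lemma phif_le (hν : 1/2 < ν) (hy : 0 < y) (hy1 : y ≤ 1) :
    phif ν y ≤ Real.sqrt (1 + ν^2) := by
  have hc := c_pos hν
  have hs := sfun_pos hc y
  apply Real.sqrt_le_sqrt
  unfold gfun
  have h1 : 0 ≤ y^2 / sfun (ν^2-1/4) y := by positivity
  nlinarith

lemma Vf_tendsto (hν : 1/2 < ν) :
    Filter.Tendsto (Vf ν) (nhdsWithin 0 (Set.Ioi 0)) (nhds 0) := by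
  have hν0 : (0:ℝ) < ν := by linarith
  have hIt := besselI_tendsto_zero hν0
  have hJt := besselI_tendsto_zero (show (0:ℝ) < ν+1 by linarith)
  have hid : Filter.Tendsto (fun y : ℝ => y) (nhdsWithin 0 (Set.Ioi 0)) (nhds 0) :=
    Filter.tendsto_id.mono_left nhdsWithin_le_nhds
  have T1 : Filter.Tendsto (fun y => y * besselI ν y * besselI (ν+1) y)
      (nhdsWithin 0 (Set.Ioi 0)) (nhds 0) := by
    simpa using (hid.mul hIt).mul hJt
  have T2 : Filter.Tendsto (fun y => (ν - phif ν y) * (besselI ν y)^2)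
      (nhdsWithin 0 (Set.Ioi 0)) (nhds 0) := by
    have hsq : Filter.Tendsto (fun y => (besselI ν y)^2) (nhdsWithin 0 (Set.Ioi 0))
        (nhds 0) := by
      have := hIt.mul hIt
      simpa [pow_two] using this
    apply squeeze_zero_norm' _ (by simpa using hsq.const_mul (ν + Real.sqrt (1+ν^2)))
    filter_upwards [Ioc_mem_nhdsGT_of_mem (Set.mem_Ico.mpr ⟨le_refl 0, zero_lt_one⟩)] with y hy
    have hy0 : (0:ℝ) < y := hy.1
    have hφ0 : 0 ≤ phif ν y := Real.sqrt_nonneg _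
    have hφle : phif ν y ≤ Real.sqrt (1+ν^2) := phif_le hν hy0 hy.2
    rw [norm_mul, Real.norm_of_nonneg (sq_nonneg _)]
    apply mul_le_mul_of_nonneg_right _ (sq_nonneg _)
    rw [Real.norm_eq_abs, abs_le]
    constructor <;> nlinarith [Real.sqrt_nonneg (1+ν^2)]
  have := (T1.add T2).congr' (Vf_eventuallyEq hν).symm
  simpa using this

lemma Vf_pos (hν : 1/2 < ν) (hx : 0 < x) : 0 < Vf ν x := by
  have h2 : 0 ≤ Vf ν (x/2) := by
    apply le_of_tendsto (Vf_tendsto hν)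
    filter_upwards [Ioo_mem_nhdsGT_of_mem (Set.mem_Ico.mpr ⟨le_refl 0, half_pos hx⟩)] with y hy
    exact (Vf_strictMono hν hy.1 (Set.mem_Ioi.mpr (half_pos hx)) hy.2).le
  have h1 : Vf ν (x/2) < Vf ν x :=
    Vf_strictMono hν (Set.mem_Ioi.mpr (half_pos hx)) (Set.mem_Ioi.mpr hx) (half_lt_self hx)
  linarith

lemma turan_key (hν : 1/2 < ν) (hx : 0 < x) :
    ((x^2+ν^2) * sfun (ν^2-1/4) x - x^2) * (besselI ν x)^2
      < (x*besselI (ν+1) x + ν*besselI ν x)^2 * sfun (ν^2-1/4) x := by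
  have hc := c_pos hν
  have hs0 := sfun_pos hc x
  have hφ0 := phif_pos hν hx
  have hI0 := besselI_pos (show (-1:ℝ) < ν by linarith) hx
  have hJ0 := besselI_pos (show (-1:ℝ) < ν+1 by linarith) hx
  have hrel := phif_rel hν hx
  have hV := Vf_pos hν hx
  unfold Vf at hV
  have hDI : x * DIf ν x = x * besselI (ν+1) x + ν * besselI ν x := by
    unfold DIf
    field_simp
  have hgt : phif ν x * besselI ν x < x * besselI (ν+1) x + ν * besselI ν x := by
    rw [← hDI]
    nlinarith [hV, hI0]
  have hsq : (phif ν x * besselI ν x)^2 < (x * besselI (ν+1) x + ν * besselI ν x)^2 := by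
    nlinarith [hgt, mul_nonneg hφ0.le hI0.le]
  have hrelI : ((x^2+ν^2) * sfun (ν^2-1/4) x - x^2) * (besselI ν x)^2
      = sfun (ν^2-1/4) x * (phif ν x * besselI ν x)^2 := by
    nlinarith [hrel]
  rw [hrelI]
  nlinarith [hsq, hs0]

end vf
noncomputable def V0f (y : ℝ) : ℝ :=
  y * besselI (1/2) y * DIf (1/2) y - (y - 1/2) * (besselI (1/2) y)^2

lemma V0alg (I DI y : ℝ) (hy : y ≠ 0) :
    I*DI + y*DI*DI + y*I*(I - DI/y + ((1/2:ℝ))^2/y^2*I) - (I^2 + (y-1/2)*(2*I*DI))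
    = y*(DI - (y-1/2)/y*I)^2 := by
  field_simp
  ring

lemma hasDerivAt_V0f {y : ℝ} (hy : 0 < y) :
    HasDerivAt V0f (y * (DIf (1/2) y - (y-1/2)/y * besselI (1/2) y)^2) y := by
  have hI : HasDerivAt (besselI (1/2)) (DIf (1/2) y) y :=
    hasDerivAt_besselI (by norm_num) hy
  have h1 : HasDerivAt (fun z => z * besselI (1/2) z * DIf (1/2) z)
      (besselI (1/2) y * DIf (1/2) y + y * DIf (1/2) y * DIf (1/2) y +
        y * besselI (1/2) y * (besselI (1/2) y - DIf (1/2) y / y +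
          ((1/2:ℝ))^2/y^2 * besselI (1/2) y)) y := by
    have := ((hasDerivAt_id y).mul hI).mul
      (hasDerivAt_DIf (ν := 1/2) (by norm_num) hy)
    refine this.congr_deriv ?_
    simp only [Pi.mul_apply, id_eq]
    field_simp
  have h2 : HasDerivAt (fun z => (z - 1/2) * (besselI (1/2) z)^2)
      ((besselI (1/2) y)^2 + (y - 1/2) * (2 * besselI (1/2) y * DIf (1/2) y)) y := by
    have := ((hasDerivAt_id y).sub_const (1/2)).mul (hI.pow 2)
    refine this.congr_deriv ?_
    simp only [id_eq, pow_one, Nat.cast_ofNat, Pi.pow_apply]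
    ring
  have htot := h1.sub h2
  have := V0alg (besselI (1/2) y) (DIf (1/2) y) y hy.ne'
  rw [show ((fun z => z * besselI (1/2) z * DIf (1/2) z) - fun z => (z - 1/2) * besselI (1/2) z ^ 2)
    = V0f from rfl] at htot
  exact this ▸ htot

lemma V0f_one_pos : 0 < V0f 1 := by
  have hI0 := besselI_pos (show (-1:ℝ) < 1/2 by norm_num) one_pos
  have hJ0 := besselI_pos (show (-1:ℝ) < 1/2+1 by norm_num) one_pos
  unfold V0f DIf
  norm_num
  nlinarith [hI0, hJ0]

lemma V0f_mono : MonotoneOn V0f (Set.Ici 1) := by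
  apply monotoneOn_of_deriv_nonneg (convex_Ici 1)
  · intro y hy
    have hy0 : (0:ℝ) < y := lt_of_lt_of_le one_pos hy
    exact (hasDerivAt_V0f hy0).continuousAt.continuousWithinAt
  · intro y hy
    rw [interior_Ici] at hy
    have hy0 : (0:ℝ) < y := lt_trans one_pos hy
    exact (hasDerivAt_V0f hy0).differentiableAt.differentiableWithinAt
  · intro y hy
    rw [interior_Ici] at hy
    have hy0 : (0:ℝ) < y := lt_trans one_pos hy
    rw [(hasDerivAt_V0f hy0).deriv]
    positivity

lemma turan_key_half {x : ℝ} (hx : 0 < x) :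
    (x - 1/2) * besselI (1/2) x < x * besselI (1/2+1) x + 1/2 * besselI (1/2) x ∧
    -(x * besselI (1/2+1) x + 1/2 * besselI (1/2) x) < (x - 1/2) * besselI (1/2) x := by
  have hI0 := besselI_pos (show (-1:ℝ) < 1/2 by norm_num) hx
  have hJ0 := besselI_pos (show (-1:ℝ) < 1/2+1 by norm_num) hx
  constructor
  · rcases le_or_gt x 1 with hx1 | hx1
    · nlinarith [hI0, hJ0]
    · have h1 : 0 < V0f x := lt_of_lt_of_le V0f_one_pos
        (V0f_mono (Set.mem_Ici.mpr le_rfl) (Set.mem_Ici.mpr hx1.le) hx1.le)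
      unfold V0f at h1
      have hDI : x * DIf (1/2) x = x * besselI (1/2+1) x + 1/2 * besselI (1/2) x := by
        unfold DIf
        field_simp
      nlinarith [h1, hI0, hDI]
  · nlinarith [hI0, hJ0, mul_pos hx hJ0]


theorem turan_besselI_upper_sqrt (ν : ℝ) (hν : 1 / 2 ≤ ν) (x : ℝ) (hx : 0 < x) :
    besselI ν x ^ 2 - besselI (ν - 1) x * besselI (ν + 1) x <
      besselI ν x ^ 2 / Real.sqrt (x ^ 2 + ν ^ 2 - 1 / 4) := by
  have hν0 : 0 < ν := by linarith
  have hspos : (0:ℝ) < x^2 + ν^2 - 1/4 := by nlinarith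
  set s := Real.sqrt (x^2 + ν^2 - 1/4) with hsdef
  have hs0 : 0 < s := Real.sqrt_pos.mpr hspos
  have key : ((x^2+ν^2) * s - x^2) * (besselI ν x)^2
      < (x*besselI (ν+1) x + ν*besselI ν x)^2 * s := by
    rcases eq_or_lt_of_le hν with heq | hlt
    · subst heq
      have hsx : s = x := by
        rw [hsdef, show x^2+(1/2:ℝ)^2-1/4 = x^2 by ring]
        exact Real.sqrt_sq hx.le
      obtain ⟨h1, h2⟩ := turan_key_half hx
      have hsq := sq_lt_sq' h2 h1
      rw [hsx]
      nlinarith [hsq, hx]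
    · have h := turan_key hlt hx
      have hsfun : sfun (ν^2-1/4) x = s := by
        rw [hsdef]
        unfold sfun
        ring_nf
      rwa [hsfun] at h
  rw [besselI_rec hν0 hx, lt_div_iff₀ hs0, ← mul_lt_mul_iff_left₀ (pow_pos hx 2)]
  have hexp : (besselI ν x^2 - (besselI (ν+1) x + 2*ν/x*besselI ν x)*besselI (ν+1) x)*s*x^2
      = (x^2*((besselI ν x)^2 - (besselI (ν+1) x)^2)
          - 2*ν*x*besselI ν x*besselI (ν+1) x)*s := by
    field_simp
    ring
  rw [hexp]
  nlinarith [key]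
end

section
/- Let ν ≥ 1/2 be real. Then for all x > 0 the logarithmic derivative of the modified Bessel function of the first kind satisfies x · I_ν′(x) / I_ν(x) > √(x² + ν² − 1/4) − 1/2, where I_ν′ denotes the derivative of I_ν with respect to x. -/
open Real

/-- Reciprocal of `n! * Γ(n+ν+1)`, the coefficient in the Bessel series. -/
noncomputable def besselb (ν : ℝ) (n : ℕ) : ℝ :=
  ((n.factorial : ℝ) * Real.Gamma ((n : ℝ) + ν + 1))⁻¹

lemma besselb_pos {ν : ℝ} (hν : 0 < ν) (n : ℕ) : 0 < besselb ν n := by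
  have h : (0:ℝ) < (n : ℝ) + ν + 1 := by positivity
  have := Real.Gamma_pos_of_pos h
  have hf : (0:ℝ) < (n.factorial : ℝ) := by exact_mod_cast n.factorial_pos
  unfold besselb
  positivity

lemma besselb_succ {ν : ℝ} (hν : 0 < ν) (n : ℕ) :
    besselb ν n = ((n:ℝ)+1) * (((n:ℝ)+1)+ν) * besselb ν (n+1) := by
  have h : (0:ℝ) < (n : ℝ) + ν + 1 := by positivity
  have hG := Real.Gamma_pos_of_pos h
  have h1 : (((n+1 : ℕ)) : ℝ) + ν + 1 = ((n:ℝ) + ν + 1) + 1 := by push_cast; ring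
  unfold besselb
  rw [h1, Real.Gamma_add_one (ne_of_gt h), Nat.factorial_succ]
  have hf : (0:ℝ) < (n.factorial : ℝ) := by exact_mod_cast n.factorial_pos
  push_cast
  field_simp
  ring

lemma gamma_ge {ν : ℝ} (hν : 0 < ν) (n : ℕ) :
    Real.Gamma (ν + 1) ≤ Real.Gamma ((n : ℝ) + ν + 1) := by
  induction n with
  | zero => simp
  | succ n ih =>
      have h : (0:ℝ) < (n : ℝ) + ν + 1 := by positivity
      have h1 : (((n+1 : ℕ)) : ℝ) + ν + 1 = ((n:ℝ) + ν + 1) + 1 := by push_cast; ring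
      rw [h1, Real.Gamma_add_one (ne_of_gt h)]
      nlinarith [Real.Gamma_pos_of_pos h, ih]

lemma besselb_le {ν : ℝ} (hν : 0 < ν) (n : ℕ) :
    besselb ν n ≤ (Real.Gamma (ν+1))⁻¹ * (1 / n.factorial) := by
  have h : (0:ℝ) < (n : ℝ) + ν + 1 := by positivity
  have hG := Real.Gamma_pos_of_pos h
  have hG1 : 0 < Real.Gamma (ν + 1) := Real.Gamma_pos_of_pos (by positivity)
  have hf : (0:ℝ) < (n.factorial : ℝ) := by exact_mod_cast n.factorial_pos
  have hle : Real.Gamma (ν+1) * n.factorial ≤ (n.factorial : ℝ) * Real.Gamma ((n:ℝ)+ν+1) := by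
    have := gamma_ge hν n
    nlinarith
  calc besselb ν n ≤ (Real.Gamma (ν+1) * n.factorial)⁻¹ := by
        unfold besselb
        exact inv_anti₀ (by positivity) hle
    _ = (Real.Gamma (ν+1))⁻¹ * (1 / n.factorial) := by
        rw [mul_inv, one_div]

/-- Master summability lemma, without linear factor. -/
lemma besselb_summable0 {ν : ℝ} (hν : 0 < ν) {q : ℝ} (hq : 0 ≤ q) :
    Summable fun n : ℕ => q ^ n * besselb ν n := by
  have hG1 : 0 < Real.Gamma (ν + 1) := Real.Gamma_pos_of_pos (by positivity)
  refine Summable.of_nonneg_of_le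
    (fun n => mul_nonneg (pow_nonneg hq n) (besselb_pos hν n).le) (fun n => ?_)
    (((Real.summable_pow_div_factorial q).mul_left (Real.Gamma (ν+1))⁻¹))
  have h := besselb_le hν n
  have hqn : (0:ℝ) ≤ q ^ n := by positivity
  calc q ^ n * besselb ν n ≤ q ^ n * ((Real.Gamma (ν+1))⁻¹ * (1 / n.factorial)) := by
        exact mul_le_mul_of_nonneg_left h hqn
    _ = (Real.Gamma (ν+1))⁻¹ * (q ^ n / n.factorial) := by ring

/-- Master summability lemma, with linear factor. -/
lemma besselb_summable1 {ν : ℝ} (hν : 0 < ν) {c q : ℝ} (hc : 0 ≤ c) (hq : 0 ≤ q) :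
    Summable fun n : ℕ => (2*(n:ℝ) + c) * q ^ n * besselb ν n := by
  have hs : Summable fun n : ℕ => (2+c) * ((2*q) ^ n * besselb ν n) :=
    (besselb_summable0 hν (q := 2*q) (by positivity)).mul_left (2+c)
  refine Summable.of_nonneg_of_le (fun n => ?_) (fun n => ?_) hs
  · have := (besselb_pos hν n).le
    positivity
  · have hb := (besselb_pos hν n).le
    have h2 : (n:ℝ) ≤ 2 ^ n := by exact_mod_cast (Nat.lt_two_pow_self (n := n)).le
    have h1 : (1:ℝ) ≤ 2 ^ n := one_le_pow₀ (by norm_num)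
    have hqn : (0:ℝ) ≤ q ^ n := by positivity
    have h2n : (0:ℝ) ≤ (2:ℝ) ^ n := by positivity
    have hcn : c * 1 ≤ c * 2 ^ n := mul_le_mul_of_nonneg_left h1 hc
    have key : (2*(n:ℝ) + c) * q ^ n ≤ (2+c) * (2*q) ^ n := by
      rw [mul_pow]
      have : (2*(n:ℝ) + c) ≤ (2+c) * 2 ^ n := by nlinarith
      nlinarith
    nlinarith [mul_le_mul_of_nonneg_right key hb]

/-- Summand of the Bessel series. -/
noncomputable def besselu (ν x : ℝ) (n : ℕ) : ℝ := (x/2) ^ (2*(n:ℝ) + ν) * besselb ν n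

/-- Summand of `x I_ν'(x)`. -/
noncomputable def besselv (ν x : ℝ) (n : ℕ) : ℝ := (2*(n:ℝ) + ν) * besselu ν x n

lemma besselI_eq_tsum {ν x : ℝ} : besselI ν x = ∑' n, besselu ν x n := by
  unfold besselI besselu besselb
  exact tsum_congr fun n => div_eq_mul_inv _ _

lemma besselu_pos {ν x : ℝ} (hν : 0 < ν) (hx : 0 < x) (n : ℕ) : 0 < besselu ν x n :=
  mul_pos (Real.rpow_pos_of_pos (by positivity) _) (besselb_pos hν n)

lemma rpow_split {p : ℝ} (hp : 0 < p) (e : ℝ) (n : ℕ) :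
    p ^ (2*(n:ℝ) + e) = p ^ e * (p^2) ^ n := by
  rw [Real.rpow_add hp, mul_comm]
  congr 1
  have h : (2*(n:ℝ)) = ((2*n : ℕ) : ℝ) := by push_cast; ring
  rw [h, Real.rpow_natCast, pow_mul]

lemma besselu_summable {ν x : ℝ} (hν : 0 < ν) (hx : 0 < x) : Summable (besselu ν x) := by
  have h : ∀ n : ℕ, besselu ν x n = (x/2)^ν * (((x/2)^2) ^ n * besselb ν n) := by
    intro n; unfold besselu; rw [rpow_split (by positivity) ν n]; ring
  exact (Summable.congr ((besselb_summable0 hν (q := (x/2)^2)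
    (by positivity)).mul_left ((x/2)^ν)) (fun n => (h n).symm))

lemma besselv_summable {ν x : ℝ} (hν : 0 < ν) (hx : 0 < x) : Summable (besselv ν x) := by
  have h : ∀ n : ℕ, besselv ν x n = (x/2)^ν * ((2*(n:ℝ)+ν) * ((x/2)^2) ^ n * besselb ν n) := by
    intro n; unfold besselv besselu; rw [rpow_split (by positivity) ν n]; ring
  exact (Summable.congr ((besselb_summable1 hν (c := ν) hν.le
    (q := (x/2)^2) (by positivity)).mul_left ((x/2)^ν)) (fun n => (h n).symm))

lemma besselI_hasDerivAt {ν x : ℝ} (hν : 0 < ν) (hx : 0 < x) :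
    HasDerivAt (besselI ν)
      (∑' n : ℕ, (2*(n:ℝ) + ν) * (x/2) ^ (2*(n:ℝ) + ν - 1) / 2 * besselb ν n) x := by
  have hfun : besselI ν = fun y => ∑' n : ℕ, (y/2) ^ (2*(n:ℝ) + ν) * besselb ν n := by
    funext y
    exact besselI_eq_tsum
  rw [hfun]
  -- uniform bound on Ioo (x/2) (x+1)
  set u : ℕ → ℝ := fun n =>
    (2*(n:ℝ) + ν) * ((x/4) ^ (2*(n:ℝ) + ν - 1) + ((x+1)/2) ^ (2*(n:ℝ) + ν - 1)) / 2
      * besselb ν n with hu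
  have hx4 : (0:ℝ) < x/4 := by positivity
  have hx12 : (0:ℝ) < (x+1)/2 := by positivity
  have husum : Summable u := by
    have h1 : Summable fun n : ℕ =>
        ((x/4)^(ν-1)/2) * ((2*(n:ℝ)+ν) * ((x/4)^2) ^ n * besselb ν n) :=
      (besselb_summable1 hν hν.le (q := (x/4)^2) (by positivity)).mul_left _
    have h2 : Summable fun n : ℕ =>
        (((x+1)/2)^(ν-1)/2) * ((2*(n:ℝ)+ν) * (((x+1)/2)^2) ^ n * besselb ν n) :=
      (besselb_summable1 hν hν.le (q := ((x+1)/2)^2) (by positivity)).mul_left _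
    refine Summable.congr (h1.add h2) (fun n => ?_)
    have e1 : (x/4) ^ (2*(n:ℝ) + ν - 1) = (x/4)^(ν-1) * ((x/4)^2) ^ n := by
      have : 2*(n:ℝ) + ν - 1 = 2*(n:ℝ) + (ν-1) := by ring
      rw [this, rpow_split hx4 (ν-1) n]
    have e2 : ((x+1)/2) ^ (2*(n:ℝ) + ν - 1) = ((x+1)/2)^(ν-1) * (((x+1)/2)^2) ^ n := by
      have : 2*(n:ℝ) + ν - 1 = 2*(n:ℝ) + (ν-1) := by ring
      rw [this, rpow_split hx12 (ν-1) n]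
    rw [hu]
    simp only
    rw [e1, e2]
    ring
  have hmem : x ∈ Set.Ioo (x/2) (x+1) := by constructor <;> linarith
  have := hasDerivAt_tsum_of_isPreconnected husum isOpen_Ioo isPreconnected_Ioo
    (g := fun (n : ℕ) (y : ℝ) => (y/2) ^ (2*(n:ℝ) + ν) * besselb ν n)
    (g' := fun (n : ℕ) (y : ℝ) => (2*(n:ℝ) + ν) * (y/2) ^ (2*(n:ℝ) + ν - 1) / 2 * besselb ν n)
    (fun n y hy => ?_) (fun n y hy => ?_) hmem ?_ hmem
  · exact this
  · -- HasDerivAt of each term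
    have hy0 : 0 < y := lt_trans (by linarith [hmem.1]) hy.1
    have h1 : HasDerivAt (fun z : ℝ => z/2) (1/2) y := (hasDerivAt_id y).div_const 2
    have h2 : HasDerivAt (fun z : ℝ => z ^ (2*(n:ℝ) + ν))
        ((2*(n:ℝ) + ν) * (y/2) ^ (2*(n:ℝ) + ν - 1)) (y/2) :=
      Real.hasDerivAt_rpow_const (Or.inl (by positivity))
    have h3 := (h2.comp y h1).mul_const (besselb ν n)
    refine h3.congr_deriv ?_
    ring
  · -- bound
    have hy0 : 0 < y := lt_trans (by linarith [hmem.1]) hy.1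
    have hb := (besselb_pos hν n).le
    have hkey : (y/2) ^ (2*(n:ℝ) + ν - 1)
        ≤ (x/4) ^ (2*(n:ℝ) + ν - 1) + ((x+1)/2) ^ (2*(n:ℝ) + ν - 1) := by
      rcases le_or_gt 0 (2*(n:ℝ) + ν - 1) with he | he
      · have : (y/2) ^ (2*(n:ℝ) + ν - 1) ≤ ((x+1)/2) ^ (2*(n:ℝ) + ν - 1) :=
          Real.rpow_le_rpow (by positivity) (by linarith [hy.2]) he
        have h0 : (0:ℝ) ≤ (x/4) ^ (2*(n:ℝ) + ν - 1) := (Real.rpow_pos_of_pos hx4 _).le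
        linarith
      · have : (y/2) ^ (2*(n:ℝ) + ν - 1) ≤ (x/4) ^ (2*(n:ℝ) + ν - 1) :=
          Real.rpow_le_rpow_of_nonpos (by positivity) (by linarith [hy.1]) he.le
        have h0 : (0:ℝ) ≤ ((x+1)/2) ^ (2*(n:ℝ) + ν - 1) := (Real.rpow_pos_of_pos hx12 _).le
        linarith
    rw [Real.norm_eq_abs, abs_of_nonneg (by positivity)]
    rw [hu]
    simp only
    gcongr
  · -- summability at base point
    exact Summable.congr (besselu_summable hν hx) (fun n => rfl)

/-- The telescoping certificate identity (Gosper certificate). -/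
lemma key_scalar {ν M : ℝ} (hν : 1/2 ≤ ν) (hM : 1 ≤ M) (i : ℝ) :
    (2*i+ν) * (2*(M-i)+ν) + (2*i+ν) - ν^2 + 1/2 - 4*(M-i)*((M-i)+ν)
      = (2*ν^2 - 1/2)/(2*M+2*ν-1)
        + (8/(2*M+2*ν-1)*(i+1)
            + ((ν + 1/2 - 4*M^2 - 2*M*ν - (2*ν^2-1/2)/(2*M+2*ν-1))/(M*(M+ν))
               - 8/(2*M+2*ν-1))) * (M-i) * ((M-i)+ν)
        - i*(i+ν) * (8/(2*M+2*ν-1)*i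
            + ((ν + 1/2 - 4*M^2 - 2*M*ν - (2*ν^2-1/2)/(2*M+2*ν-1))/(M*(M+ν))
               - 8/(2*M+2*ν-1))) := by
  have h1 : 2*M+2*ν-1 ≠ 0 := by nlinarith
  have h2 : M ≠ 0 := by nlinarith
  have h3 : M+ν ≠ 0 := by nlinarith
  have h1' : -1 + M*2 + ν*2 ≠ 0 := by contrapose! h1; linarith
  field_simp
  ring_nf
  field_simp
  ring

/-- Nonnegativity of the `m`-th coefficient, via telescoping. -/
lemma gamma_nonneg {ν : ℝ} (hν : 1/2 ≤ ν) {m : ℕ} (hm : 1 ≤ m) :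
    0 ≤ ∑ k ∈ Finset.range (m+1),
      ((2*(k:ℝ)+ν) * (2*((m-k:ℕ):ℝ)+ν) + (2*(k:ℝ)+ν) - ν^2 + 1/2
        - 4*((m-k:ℕ):ℝ)*(((m-k:ℕ):ℝ)+ν)) * (besselb ν k * besselb ν (m-k)) := by
  have hν0 : (0:ℝ) < ν := by linarith
  have hM : (1:ℝ) ≤ (m:ℝ) := by exact_mod_cast hm
  obtain ⟨C, hC⟩ : ∃ C : ℝ, C = (2*ν^2 - 1/2)/(2*(m:ℝ)+2*ν-1) := ⟨_, rfl⟩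
  obtain ⟨α, hα⟩ : ∃ α : ℝ, α = 8/(2*(m:ℝ)+2*ν-1) := ⟨_, rfl⟩
  obtain ⟨β, hβ⟩ : ∃ β : ℝ,
      β = (ν + 1/2 - 4*(m:ℝ)^2 - 2*(m:ℝ)*ν - C)/((m:ℝ)*((m:ℝ)+ν)) - α := ⟨_, rfl⟩
  have keyid : ∀ i : ℝ,
      (2*i+ν) * (2*((m:ℝ)-i)+ν) + (2*i+ν) - ν^2 + 1/2 - 4*((m:ℝ)-i)*(((m:ℝ)-i)+ν)
        = C + (α*(i+1)+β) * ((m:ℝ)-i) * (((m:ℝ)-i)+ν) - i*(i+ν) * (α*i+β) := by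
    intro i
    rw [hβ, hα, hC]
    exact key_scalar hν hM i
  set G : ℕ → ℝ := fun k => (k:ℝ)*((k:ℝ)+ν)*(α*(k:ℝ)+β)
      * ((m+1-k:ℕ):ℝ) * (((m+1-k:ℕ):ℝ)+ν) * (besselb ν k * besselb ν (m+1-k)) with hG
  have hlocal : ∀ k ∈ Finset.range (m+1),
      ((2*(k:ℝ)+ν) * (2*((m-k:ℕ):ℝ)+ν) + (2*(k:ℝ)+ν) - ν^2 + 1/2
        - 4*((m-k:ℕ):ℝ)*(((m-k:ℕ):ℝ)+ν)) * (besselb ν k * besselb ν (m-k))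
      = C * (besselb ν k * besselb ν (m-k)) + (G (k+1) - G k) := by
    intro k hk
    have hkm : k ≤ m := Nat.lt_succ_iff.mp (Finset.mem_range.mp hk)
    have ec : ((m-k:ℕ):ℝ) = (m:ℝ) - (k:ℝ) := by
      rw [Nat.cast_sub hkm]
    have e2 : m+1-(k+1) = m-k := by omega
    have e3 : m+1-k = (m-k)+1 := by omega
    have hGk1 : G (k+1) = (α*((k:ℝ)+1)+β) * ((m:ℝ)-(k:ℝ)) * (((m:ℝ)-(k:ℝ))+ν)
        * (besselb ν k * besselb ν (m-k)) := by
      simp only [hG, e2]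
      rw [besselb_succ hν0 k, ec]
      push_cast
      ring
    have hGk : G k = (k:ℝ)*((k:ℝ)+ν)*(α*(k:ℝ)+β) * (besselb ν k * besselb ν (m-k)) := by
      simp only [hG, e3]
      rw [besselb_succ hν0 (m-k)]
      push_cast
      ring
    rw [hGk1, hGk, ec]
    linear_combination (besselb ν k * besselb ν (m-k)) * keyid (k:ℝ)
  rw [Finset.sum_congr rfl hlocal, Finset.sum_add_distrib, Finset.sum_range_sub G]
  have hG0 : G 0 = 0 := by simp [hG]
  have hGm : G (m+1) = 0 := by simp [hG, Nat.sub_self]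
  rw [hG0, hGm]
  have hCpos : 0 ≤ C := by
    rw [hC]
    apply div_nonneg <;> nlinarith
  have : 0 ≤ ∑ k ∈ Finset.range (m+1), C * (besselb ν k * besselb ν (m-k)) := by
    apply Finset.sum_nonneg
    intro k hk
    exact mul_nonneg hCpos (mul_nonneg (besselb_pos hν0 k).le (besselb_pos hν0 _).le)
  linarith

lemma bessel_key_pos {ν x : ℝ} (hν : 1/2 ≤ ν) (hx : 0 < x) :
    x^2 * ((∑' n, besselu ν x n) * (∑' n, besselu ν x n))
      + (ν^2 - 1/2) * ((∑' n, besselu ν x n) * (∑' n, besselu ν x n))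
      < (∑' n, besselv ν x n) * (∑' n, besselv ν x n)
        + (∑' n, besselv ν x n) * (∑' n, besselu ν x n) := by
  have hν0 : (0:ℝ) < ν := by linarith
  have hp : (0:ℝ) < x/2 := by positivity
  have hus := besselu_summable hν0 hx
  have hvs := besselv_summable hν0 hx
  have hun : ∀ n, 0 ≤ besselu ν x n := fun n => (besselu_pos hν0 hx n).le
  have hvn : ∀ n, 0 ≤ besselv ν x n := fun n =>
    mul_nonneg (by positivity) (hun n)
  have hus' : Summable fun n => ‖besselu ν x n‖ :=
    Summable.congr hus fun n => (Real.norm_of_nonneg (hun n)).symm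
  have hvs' : Summable fun n => ‖besselv ν x n‖ :=
    Summable.congr hvs fun n => (Real.norm_of_nonneg (hvn n)).symm
  -- per-term product formula
  have hprod : ∀ m : ℕ, ∀ k ∈ Finset.range (m+1),
      besselu ν x k * besselu ν x (m-k)
        = (x/2)^(2*(m:ℝ)+2*ν) * (besselb ν k * besselb ν (m-k)) := by
    intro m k hk
    have hkm : k ≤ m := Nat.lt_succ_iff.mp (Finset.mem_range.mp hk)
    have ec : ((m-k:ℕ):ℝ) = (m:ℝ) - (k:ℝ) := by rw [Nat.cast_sub hkm]
    have hexp : (x/2)^(2*(k:ℝ)+ν) * (x/2)^(2*((m-k:ℕ):ℝ)+ν) = (x/2)^(2*(m:ℝ)+2*ν) := by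
      rw [← Real.rpow_add hp]
      congr 1
      rw [ec]; ring
    calc besselu ν x k * besselu ν x (m-k)
        = ((x/2)^(2*(k:ℝ)+ν) * (x/2)^(2*((m-k:ℕ):ℝ)+ν)) * (besselb ν k * besselb ν (m-k)) := by
          unfold besselu; ring
      _ = (x/2)^(2*(m:ℝ)+2*ν) * (besselb ν k * besselb ν (m-k)) := by rw [hexp]
  -- Cauchy products
  have hTT := tsum_mul_tsum_eq_tsum_sum_range_of_summable_norm hvs' hvs'
  have hTS := tsum_mul_tsum_eq_tsum_sum_range_of_summable_norm hvs' hus'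
  have hSS := tsum_mul_tsum_eq_tsum_sum_range_of_summable_norm hus' hus'
  have sTT : Summable fun m => ∑ k ∈ Finset.range (m+1), besselv ν x k * besselv ν x (m-k) :=
    summable_sum_mul_range_of_summable_norm' hvs' hvs hvs' hvs
  have sTS : Summable fun m => ∑ k ∈ Finset.range (m+1), besselv ν x k * besselu ν x (m-k) :=
    summable_sum_mul_range_of_summable_norm' hvs' hvs hus' hus
  have sSS : Summable fun m => ∑ k ∈ Finset.range (m+1), besselu ν x k * besselu ν x (m-k) :=
    summable_sum_mul_range_of_summable_norm' hus' hus hus' hus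
  -- the shifted series for x^2 * S * S
  set f : ℕ → ℝ := fun m => (x/2)^(2*(m:ℝ)+2*ν)
      * ∑ k ∈ Finset.range (m+1),
          4*((m-k:ℕ):ℝ)*(((m-k:ℕ):ℝ)+ν) * (besselb ν k * besselb ν (m-k)) with hf
  have hf0 : f 0 = 0 := by simp [hf]
  have hfs : ∀ m : ℕ, f (m+1)
      = x^2 * ∑ k ∈ Finset.range (m+1), besselu ν x k * besselu ν x (m-k) := by
    intro m
    have hp2 : (x/2)^(2*((m:ℝ)+1)+2*ν) = (x/2)^(2*(m:ℝ)+2*ν) * (x/2)^2 := by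
      rw [← Real.rpow_natCast (x/2) 2, ← Real.rpow_add hp]
      congr 1
      push_cast; ring
    simp only [hf]
    rw [Finset.sum_range_succ]
    simp only [Nat.sub_self, Nat.cast_zero, Nat.cast_ofNat, mul_zero, zero_mul, zero_add,
      Nat.cast_add, Nat.cast_one, add_zero]
    rw [Finset.mul_sum, Finset.mul_sum]
    apply Finset.sum_congr rfl
    intro k hk
    have hkm : k ≤ m := Nat.lt_succ_iff.mp (Finset.mem_range.mp hk)
    have e3 : m+1-k = (m-k)+1 := by omega
    rw [hprod m k hk, e3, besselb_succ hν0 (m-k), hp2]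
    push_cast
    ring
  have hsf1 : Summable fun m => f (m+1) :=
    Summable.congr (sSS.mul_left (x^2)) (fun m => (hfs m).symm)
  have hsf : Summable f := (summable_nat_add_iff 1).mp hsf1
  have hshift : x^2 * ((∑' n, besselu ν x n) * (∑' n, besselu ν x n)) = ∑' m, f m := by
    calc x^2 * ((∑' n, besselu ν x n) * (∑' n, besselu ν x n))
        = x^2 * ∑' m, ∑ k ∈ Finset.range (m+1), besselu ν x k * besselu ν x (m-k) := by
          rw [hSS]
      _ = ∑' m, x^2 * ∑ k ∈ Finset.range (m+1), besselu ν x k * besselu ν x (m-k) := by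
          rw [tsum_mul_left]
      _ = ∑' m, f (m+1) := tsum_congr fun m => (hfs m).symm
      _ = ∑' m, f m := by rw [Summable.tsum_eq_zero_add hsf, hf0, zero_add]
  -- combine everything into a single series
  have hterm : ∀ m : ℕ,
      (∑ k ∈ Finset.range (m+1), besselv ν x k * besselv ν x (m-k))
        + (∑ k ∈ Finset.range (m+1), besselv ν x k * besselu ν x (m-k))
        - (ν^2-1/2) * (∑ k ∈ Finset.range (m+1), besselu ν x k * besselu ν x (m-k))
        - f m
      = (x/2)^(2*(m:ℝ)+2*ν) * ∑ k ∈ Finset.range (m+1),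
          ((2*(k:ℝ)+ν) * (2*((m-k:ℕ):ℝ)+ν) + (2*(k:ℝ)+ν) - ν^2 + 1/2
            - 4*((m-k:ℕ):ℝ)*(((m-k:ℕ):ℝ)+ν)) * (besselb ν k * besselb ν (m-k)) := by
    intro m
    simp only [hf]
    rw [Finset.mul_sum, Finset.mul_sum, Finset.mul_sum, ← Finset.sum_add_distrib,
      ← Finset.sum_sub_distrib, ← Finset.sum_sub_distrib]
    apply Finset.sum_congr rfl
    intro k hk
    simp only [besselv]
    linear_combination ((2*(k:ℝ)+ν)*(2*((m-k:ℕ):ℝ)+ν) + (2*(k:ℝ)+ν) - (ν^2-1/2))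
      * hprod m k hk
  have hsum : Summable fun m : ℕ => (x/2)^(2*(m:ℝ)+2*ν) * ∑ k ∈ Finset.range (m+1),
      ((2*(k:ℝ)+ν) * (2*((m-k:ℕ):ℝ)+ν) + (2*(k:ℝ)+ν) - ν^2 + 1/2
        - 4*((m-k:ℕ):ℝ)*(((m-k:ℕ):ℝ)+ν)) * (besselb ν k * besselb ν (m-k)) :=
    Summable.congr (((sTT.add sTS).sub (sSS.mul_left (ν^2-1/2))).sub hsf) hterm
  have hD : (∑' n, besselv ν x n) * (∑' n, besselv ν x n)
        + (∑' n, besselv ν x n) * (∑' n, besselu ν x n)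
        - (ν^2-1/2) * ((∑' n, besselu ν x n) * (∑' n, besselu ν x n))
        - x^2 * ((∑' n, besselu ν x n) * (∑' n, besselu ν x n))
      = ∑' m : ℕ, (x/2)^(2*(m:ℝ)+2*ν) * ∑ k ∈ Finset.range (m+1),
          ((2*(k:ℝ)+ν) * (2*((m-k:ℕ):ℝ)+ν) + (2*(k:ℝ)+ν) - ν^2 + 1/2
            - 4*((m-k:ℕ):ℝ)*(((m-k:ℕ):ℝ)+ν)) * (besselb ν k * besselb ν (m-k)) := by
    rw [hTT, hTS, hshift, hSS, ← tsum_mul_left, ← Summable.tsum_add sTT sTS,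
      ← Summable.tsum_sub (sTT.add sTS) (sSS.mul_left (ν^2-1/2)),
      ← Summable.tsum_sub (((sTT.add sTS).sub (sSS.mul_left (ν^2-1/2)))) hsf]
    exact tsum_congr hterm
  -- positivity of the series
  have hpos0 : 0 < (x/2)^(2*((0:ℕ):ℝ)+2*ν) * ∑ k ∈ Finset.range (0+1),
      ((2*(k:ℝ)+ν) * (2*((0-k:ℕ):ℝ)+ν) + (2*(k:ℝ)+ν) - ν^2 + 1/2
        - 4*((0-k:ℕ):ℝ)*(((0-k:ℕ):ℝ)+ν)) * (besselb ν k * besselb ν (0-k)) := by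
    rw [Finset.sum_range_one]
    simp only [Nat.sub_self, Nat.cast_zero, mul_zero, zero_mul, sub_zero, zero_add]
    have hb := besselb_pos hν0 0
    have hc : (0:ℝ) < ν * ν + ν - ν^2 + 1/2 := by nlinarith
    have := Real.rpow_pos_of_pos hp (2*((0:ℕ):ℝ)+2*ν)
    have h2 : 0*2+ν = ν := by ring
    positivity
  have hge : ∀ m : ℕ, m ≠ 0 → 0 ≤ (x/2)^(2*(m:ℝ)+2*ν) * ∑ k ∈ Finset.range (m+1),
      ((2*(k:ℝ)+ν) * (2*((m-k:ℕ):ℝ)+ν) + (2*(k:ℝ)+ν) - ν^2 + 1/2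
        - 4*((m-k:ℕ):ℝ)*(((m-k:ℕ):ℝ)+ν)) * (besselb ν k * besselb ν (m-k)) := by
    intro m hm
    exact mul_nonneg (Real.rpow_pos_of_pos hp _).le (gamma_nonneg hν (Nat.one_le_iff_ne_zero.mpr hm))
  have hlow := Summable.le_tsum hsum 0 (fun j hj => hge j hj)
  nlinarith [hlow, hpos0, hD]

theorem besselI_logDeriv_lower (ν : ℝ) (hν : 1 / 2 ≤ ν) (x : ℝ) (hx : 0 < x) :
    x * deriv (besselI ν) x / besselI ν x > Real.sqrt (x ^ 2 + ν ^ 2 - 1 / 4) - 1 / 2 := by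
  have hν0 : (0:ℝ) < ν := by linarith
  have hp : (0:ℝ) < x/2 := by positivity
  have hus := besselu_summable hν0 hx
  have hvs := besselv_summable hν0 hx
  have hS0 : 0 < ∑' n, besselu ν x n :=
    Summable.tsum_pos hus (fun n => (besselu_pos hν0 hx n).le) 0 (besselu_pos hν0 hx 0)
  have hT0 : 0 < ∑' n, besselv ν x n := by
    refine Summable.tsum_pos hvs (fun n => mul_nonneg (by positivity) (besselu_pos hν0 hx n).le) 0 ?_
    exact mul_pos (by norm_num; linarith) (besselu_pos hν0 hx 0)
  have hI : besselI ν x = ∑' n, besselu ν x n := besselI_eq_tsum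
  have hxd : x * deriv (besselI ν) x = ∑' n, besselv ν x n := by
    rw [(besselI_hasDerivAt hν0 hx).deriv, ← tsum_mul_left]
    refine tsum_congr fun n => ?_
    have he : (x/2)^(2*(n:ℝ)+ν-1) * (x/2) = (x/2)^(2*(n:ℝ)+ν) := by
      rw [← Real.rpow_add_one hp.ne']
      congr 1
      ring
    unfold besselv besselu
    rw [← he]
    ring
  rw [hI, hxd, gt_iff_lt, sub_lt_iff_lt_add]
  set S := ∑' n, besselu ν x n
  set T := ∑' n, besselv ν x n
  have hy : 0 < T / S + 1/2 := by positivity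
  rw [Real.sqrt_lt' hy]
  have hkey := bessel_key_pos hν hx
  have hident : ((T/S)^2 + (T/S)) * S^2 = T^2 + T*S := by
    field_simp
  have hkey2 : (x^2 + ν^2 - 1/2) * S^2 < ((T/S)^2 + (T/S)) * S^2 := by
    rw [hident]
    nlinarith [hkey]
  have hS2 : 0 < S^2 := by positivity
  have hfin : x^2 + ν^2 - 1/2 < (T/S)^2 + (T/S) := lt_of_mul_lt_mul_right (by linarith) hS2.le
  nlinarith [hfin]
end

section
/- Let ν ≥ 1/2 be real and let x > 0 satisfy x² ≤ 2ν³(ν + √(ν² + 1)). Then x · I_ν′(x)/I_ν(x) > √(x² + ν²) − (x² + 2ν²)/(2(x² + ν²)), where I_ν′ denotes the derivative of I_ν with respect to x. -/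
open Real Topology Filter

noncomputable def bc (ν : ℝ) (n : ℕ) : ℝ := (n.factorial : ℝ) * Real.Gamma ((n:ℝ) + ν + 1)

noncomputable def bf (ν : ℝ) (k : ℕ) (x : ℝ) : ℝ :=
  ∑' n:ℕ, (2*(n:ℝ)+ν)^k * ((x/2)^(2*(n:ℝ)+ν) / bc ν n)


lemma bc_pos {ν : ℝ} (hν : 0 < ν) (n : ℕ) : 0 < bc ν n := by
  unfold bc
  have : (0:ℝ) < (n:ℝ) + ν + 1 := by positivity
  positivity

lemma Gamma_ge {ν : ℝ} (hν : 0 < ν) (n : ℕ) :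
    Real.Gamma (ν+1) ≤ Real.Gamma ((n:ℝ) + ν + 1) := by
  induction n with
  | zero => simp
  | succ m ih =>
    have harg : (0:ℝ) < (m:ℝ) + ν + 1 := by positivity
    have h1 : ((m+1:ℕ):ℝ) + ν + 1 = ((m:ℝ) + ν + 1) + 1 := by push_cast; ring
    rw [h1, Real.Gamma_add_one (ne_of_gt harg)]
    have hpos := Real.Gamma_pos_of_pos harg
    nlinarith

lemma summable_master {ν : ℝ} (hν : 0 < ν) (r : ℝ) (hr : 0 ≤ r) (k : ℕ) :
    Summable (fun n : ℕ => (2*(n:ℝ)+ν)^k * r^n / bc ν n) := by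
  have hΓ : 0 < Real.Gamma (ν+1) := Real.Gamma_pos_of_pos (by positivity)
  apply Summable.of_nonneg_of_le (f := fun n : ℕ => ((2+ν)^k / Real.Gamma (ν+1)) * (((2:ℝ)^k*r)^n / (n.factorial : ℝ)))
  · intro n
    have h1 : (0:ℝ) ≤ 2*(n:ℝ)+ν := by positivity
    have := bc_pos hν n
    positivity
  · intro n
    have hfac : (0:ℝ) < (n.factorial : ℝ) := by positivity
    have hbc := bc_pos hν n
    have h2n : (2*(n:ℝ)+ν) ≤ (2+ν) * 2^n := by
      have hn2 : (n:ℝ) < 2^n := by exact_mod_cast Nat.lt_two_pow_self (n := n)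
      have h1 : (1:ℝ) ≤ 2^n := one_le_pow₀ (by norm_num)
      nlinarith
    have hnum : (2*(n:ℝ)+ν)^k * r^n ≤ (2+ν)^k * (((2:ℝ)^k*r)^n) := by
      have e1 : ((2:ℝ)^k*r)^n = ((2:ℝ)^n)^k * r^n := by
        rw [mul_pow, ← pow_mul, ← pow_mul, Nat.mul_comm]
      rw [e1, ← mul_assoc]
      apply mul_le_mul_of_nonneg_right _ (by positivity)
      rw [← mul_pow]
      exact pow_le_pow_left₀ (by positivity) h2n k
    have hden : Real.Gamma (ν+1) * (n.factorial : ℝ) ≤ bc ν n := by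
      unfold bc
      rw [mul_comm]
      exact mul_le_mul_of_nonneg_left (Gamma_ge hν n) hfac.le
    calc (2*(n:ℝ)+ν)^k * r^n / bc ν n
        ≤ ((2+ν)^k * (((2:ℝ)^k*r)^n)) / (Real.Gamma (ν+1) * (n.factorial:ℝ)) := by
          apply div_le_div₀ (by positivity) hnum (by positivity) hden
      _ = ((2+ν)^k / Real.Gamma (ν+1)) * (((2:ℝ)^k*r)^n / (n.factorial : ℝ)) := by
          field_simp
  · exact (Real.summable_pow_div_factorial _).mul_left _

lemma rpow_split_s8 {b : ℝ} (hb : 0 < b) (ν : ℝ) (n : ℕ) :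
    b^(2*(n:ℝ)+ν) = (b^2)^n * b^ν := by
  rw [Real.rpow_add hb]
  congr 1
  rw [show (2*(n:ℝ)) = ((2*n:ℕ):ℝ) by push_cast; ring, Real.rpow_natCast, pow_mul]

lemma summable_bf {ν : ℝ} (hν : 0 < ν) {x : ℝ} (hx : 0 < x) (k : ℕ) :
    Summable (fun n:ℕ => (2*(n:ℝ)+ν)^k * ((x/2)^(2*(n:ℝ)+ν)/bc ν n)) := by
  have h := (summable_master hν ((x/2)^2) (by positivity) k).mul_left ((x/2)^ν)
  refine h.congr fun n => ?_
  rw [rpow_split_s8 (by linarith : (0:ℝ) < x/2)]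
  ring

lemma term_hasDeriv {ν : ℝ} (k n : ℕ) {y : ℝ} (hy : 0 < y) :
    HasDerivAt (fun z => (2*(n:ℝ)+ν)^k * ((z/2)^(2*(n:ℝ)+ν)/bc ν n))
      ((2*(n:ℝ)+ν)^(k+1) * ((y/2)^(2*(n:ℝ)+ν)/bc ν n) / y) y := by
  have hy2 : (0:ℝ) < y/2 := by linarith
  have h1 : HasDerivAt (fun z:ℝ => z/2) (1/2) y := (hasDerivAt_id y).div_const 2
  have h2 : HasDerivAt (fun w:ℝ => w^(2*(n:ℝ)+ν)) ((2*(n:ℝ)+ν) * (y/2)^(2*(n:ℝ)+ν-1)) (y/2) :=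
    Real.hasDerivAt_rpow_const (Or.inl (ne_of_gt hy2))
  have h3 := h2.comp y h1
  have h4 := (h3.div_const (bc ν n)).const_mul ((2*(n:ℝ)+ν)^k)
  refine h4.congr_deriv ?_
  rw [Real.rpow_sub hy2, Real.rpow_one, pow_succ]
  field_simp

lemma bf_hasDerivAt {ν : ℝ} (hν : 0 < ν) (k : ℕ) {x : ℝ} (hx : 0 < x) :
    HasDerivAt (bf ν k) (bf ν (k+1) x / x) x := by
  have hmem : x ∈ Set.Ioo (x/2) (2*x) := ⟨by linarith, by linarith⟩
  have hu : Summable (fun n : ℕ =>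
      ((2*(n:ℝ)+ν)^(k+1) * (x^(2*(n:ℝ)+ν)/bc ν n)) / (x/2)) := by
    have h := ((summable_master hν (x^2) (by positivity) (k+1)).mul_left (x^ν)).div_const (x/2)
    refine h.congr fun n => ?_
    rw [rpow_split_s8 hx]
    ring
  have hD : HasDerivAt (fun z => ∑' n:ℕ, (2*(n:ℝ)+ν)^k * ((z/2)^(2*(n:ℝ)+ν)/bc ν n))
      (∑' n:ℕ, (2*(n:ℝ)+ν)^(k+1) * ((x/2)^(2*(n:ℝ)+ν)/bc ν n) / x) x := by
    apply hasDerivAt_tsum_of_isPreconnected hu isOpen_Ioo (convex_Ioo _ _).isPreconnected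
      (fun n y hy => term_hasDeriv k n (by linarith [hy.1, hmem.1] : (0:ℝ) < y))
      ?_ hmem (summable_bf hν hx k) hmem
    · intro n y hy
      have hy0 : (0:ℝ) < y := by linarith [hy.1, hmem.1]
      have hbc := bc_pos hν n
      have hp : (0:ℝ) ≤ 2*(n:ℝ)+ν := by positivity
      have hterm_pos : (0:ℝ) ≤ (2*(n:ℝ)+ν)^(k+1) * ((y/2)^(2*(n:ℝ)+ν)/bc ν n) / y := by
        have : (0:ℝ) ≤ (y/2)^(2*(n:ℝ)+ν) := Real.rpow_nonneg (by linarith) _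
        positivity
      rw [Real.norm_eq_abs, abs_of_nonneg hterm_pos]
      have hrle : (y/2)^(2*(n:ℝ)+ν) ≤ x^(2*(n:ℝ)+ν) :=
        Real.rpow_le_rpow (by linarith) (by linarith [hy.2]) hp
      apply div_le_div₀ (by positivity) ?_ (by linarith) (by linarith [hy.1])
      gcongr
  have heq : (∑' n:ℕ, (2*(n:ℝ)+ν)^(k+1) * ((x/2)^(2*(n:ℝ)+ν)/bc ν n) / x)
      = bf ν (k+1) x / x := by
    rw [bf, tsum_div_const]
  rw [heq] at hD
  exact hD

section
variable {ν x : ℝ}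

lemma summable_f (hν : 0 < ν) (hx : 0 < x) : Summable (fun n:ℕ => (x/2)^(2*(n:ℝ)+ν)/bc ν n) :=
  (summable_bf hν hx 0).congr (fun n => by rw [pow_zero, one_mul])

lemma bf0_eq : bf ν 0 x = ∑' n:ℕ, (x/2)^(2*(n:ℝ)+ν)/bc ν n :=
  tsum_congr (fun n => by rw [pow_zero, one_mul])

lemma f_pos (hν : 0 < ν) (hx : 0 < x) (n : ℕ) : 0 < (x/2)^(2*(n:ℝ)+ν)/bc ν n :=
  div_pos (Real.rpow_pos_of_pos (by linarith) _) (bc_pos hν n)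

lemma bf0_pos (hν : 0 < ν) (hx : 0 < x) : 0 < bf ν 0 x := by
  rw [bf0_eq]
  exact Summable.tsum_pos (summable_f hν hx) (fun n => (f_pos hν hx n).le) 0 (f_pos hν hx 0)

lemma bf1_gt (hν : 0 < ν) (hx : 0 < x) : ν * bf ν 0 x < bf ν 1 x := by
  have sf0 := summable_f hν hx
  have s2n : Summable (fun n:ℕ => 2*(n:ℝ) * ((x/2)^(2*(n:ℝ)+ν)/bc ν n)) := by
    have h := ((summable_bf hν hx 1).sub (sf0.mul_left ν))
    refine h.congr fun n => ?_; ring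
  have h1 : bf ν 1 x = (∑' n:ℕ, 2*(n:ℝ) * ((x/2)^(2*(n:ℝ)+ν)/bc ν n)) + ν * bf ν 0 x := by
    rw [bf, bf0_eq, ← tsum_mul_left, ← Summable.tsum_add s2n (Summable.mul_left ν sf0)]
    exact tsum_congr fun n => by ring
  have h2 : 0 < ∑' n:ℕ, 2*(n:ℝ) * ((x/2)^(2*(n:ℝ)+ν)/bc ν n) := by
    apply Summable.tsum_pos s2n (fun n => mul_nonneg (by positivity) (f_pos hν hx n).le) 1
    have h := f_pos hν hx 1
    push_cast at h ⊢
    nlinarith [h]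
  linarith

lemma shift_eq (hν : 0 < ν) (hx : 0 < x) (n : ℕ) :
    4*((n:ℝ)+1)*(((n:ℝ)+1)+ν) * ((x/2)^(2*(((n+1):ℕ):ℝ)+ν)/bc ν (n+1))
      = x^2 * ((x/2)^(2*(n:ℝ)+ν)/bc ν n) := by
  have hbc := bc_pos hν n
  have harg : (0:ℝ) < (n:ℝ)+ν+1 := by positivity
  have hbcs : bc ν (n+1) = ((n:ℝ)+1)*((n:ℝ)+ν+1) * bc ν n := by
    unfold bc
    rw [Nat.factorial_succ, show (((n+1:ℕ)):ℝ)+ν+1 = ((n:ℝ)+ν+1)+1 by push_cast; ring,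
      Real.Gamma_add_one (ne_of_gt harg)]
    push_cast; ring
  have hrp : (x/2)^(2*(((n+1):ℕ):ℝ)+ν) = (x/2)^(2*(n:ℝ)+ν) * (x/2)^(2:ℕ) := by
    rw [← Real.rpow_natCast (x/2) 2, ← Real.rpow_add (by linarith : (0:ℝ)<x/2)]
    congr 1; push_cast; ring
  rw [hrp, hbcs]
  have h0 : ((n:ℝ)+1) ≠ 0 := by positivity
  have h1 : ((n:ℝ)+ν+1) ≠ 0 := ne_of_gt harg
  field_simp
  ring

lemma bf2_eq (hν : 0 < ν) (hx : 0 < x) : bf ν 2 x = (x^2+ν^2) * bf ν 0 x := by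
  have sf0 := summable_f hν hx
  have sh : Summable (fun n:ℕ => 4*(n:ℝ)*((n:ℝ)+ν) * ((x/2)^(2*(n:ℝ)+ν)/bc ν n)) := by
    have h := (summable_bf hν hx 2).sub (sf0.mul_left (ν^2))
    refine h.congr fun n => ?_; ring
  have t1 : ∑' n:ℕ, 4*(n:ℝ)*((n:ℝ)+ν) * ((x/2)^(2*(n:ℝ)+ν)/bc ν n) = x^2 * bf ν 0 x := by
    rw [Summable.tsum_eq_zero_add sh]
    have hz : 4*((0:ℕ):ℝ)*(((0:ℕ):ℝ)+ν) * ((x/2)^(2*((0:ℕ):ℝ)+ν)/bc ν 0) = 0 := by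
      norm_num
    rw [hz, zero_add, bf0_eq, ← tsum_mul_left]
    apply tsum_congr
    intro n
    have := shift_eq hν hx n
    push_cast at this ⊢
    linarith [this]
  have t2 : bf ν 2 x = ν^2 * bf ν 0 x
      + ∑' n:ℕ, 4*(n:ℝ)*((n:ℝ)+ν) * ((x/2)^(2*(n:ℝ)+ν)/bc ν n) := by
    rw [bf, bf0_eq, ← tsum_mul_left, ← Summable.tsum_add (sf0.mul_left (ν^2)) sh]
    exact tsum_congr fun n => by ring
  rw [t2, t1]; ring

end

lemma core_ineq (ν r : ℝ) (hν : 1/2 ≤ ν) (hr : ν < r)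
    (hA : r^2 + ν^2 < 2*r^2*(r-ν)) (hB : r^2 - 2*r*ν^2 ≤ ν^2) :
    r^4 + 6*r^2*ν^2 - 3*ν^4 < 8*ν^2*r^3 := by
  have hν0 : (0:ℝ) < ν := by linarith
  have hr0 : (0:ℝ) < r := by linarith
  rcases le_or_gt (r^2) (3*ν^2) with h3 | h3
  · nlinarith [mul_pos hr0 hν0, sq_nonneg (r-ν), sq_nonneg (r*ν), mul_pos (mul_pos hr0 hr0) hν0, mul_pos hr0 (sub_pos.mpr hr), sq_nonneg r, sq_nonneg ν, mul_nonneg (sub_nonneg.mpr h3) (sub_pos.mpr hr).le]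
  · nlinarith [mul_pos hr0 hν0, sq_nonneg (r-ν), mul_pos hr0 hr0, mul_nonneg (mul_pos hr0 hr0).le (sub_pos.mpr h3).le, mul_nonneg (sub_pos.mpr h3).le (sub_pos.mpr h3).le]

lemma subsol' (ν r y : ℝ) (hν0 : (0:ℝ) < ν) (hr : ν < r) (hy2 : y^2 = r^2 - ν^2)
    (key : r^4 + 6*r^2*ν^2 - 3*ν^4 < 8*ν^2*r^3) :
    y*(y/r + y*ν^2/(r^2)^2) < r^2 - (r - (r^2+ν^2)/(2*r^2))^2 := by
  have hr0 : (0:ℝ) < r := lt_trans hν0 hr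
  have h1 : r ≠ 0 := ne_of_gt hr0
  rw [← sub_pos]
  have hyy : r^2 - (r - (r^2+ν^2)/(2*r^2))^2 - y*(y/r + y*ν^2/(r^2)^2)
      = (8*ν^2*r^3 - (r^4+6*r^2*ν^2-3*ν^4))/(4*r^4) := by
    have h2 : y*(y/r + y*ν^2/(r^2)^2) = (y^2)*(1/r + ν^2/r^4) := by ring
    rw [h2, hy2]; field_simp; ring
  rw [hyy]
  exact div_pos (by linarith) (by positivity)

/-- The subsolution inequality at a point where `g y > ν`. -/
lemma subsol (ν y : ℝ) (hν : 1/2 ≤ ν) (hy : 0 < y)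
    (hbound : y^2 ≤ 2*ν^3*(ν + Real.sqrt (ν^2+1)))
    (hg : ν < Real.sqrt (y^2+ν^2) - (y^2+2*ν^2)/(2*(y^2+ν^2))) :
    y*(y/Real.sqrt (y^2+ν^2) + y*ν^2/((y^2+ν^2))^2)
      < (y^2+ν^2) - (Real.sqrt (y^2+ν^2) - (y^2+2*ν^2)/(2*(y^2+ν^2)))^2 := by
  have hν0 : (0:ℝ) < ν := by linarith
  have hs0 : (0:ℝ) < y^2+ν^2 := by positivity
  set r := Real.sqrt (y^2+ν^2) with hrdef
  have hr2 : r^2 = y^2+ν^2 := Real.sq_sqrt hs0.le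
  have hr0 : 0 < r := Real.sqrt_pos.mpr hs0
  have hrν : ν < r := by nlinarith [sq_nonneg (r - ν)]
  -- translate bound into hB
  have hE2 : (Real.sqrt (ν^2+1))^2 = ν^2+1 := Real.sq_sqrt (by positivity)
  set E := Real.sqrt (ν^2+1) with hEdef
  have hE0 : 0 < E := Real.sqrt_pos.mpr (by positivity)
  have hrle : r ≤ ν*(ν+E) := by
    have h1 : r^2 ≤ (ν*(ν+E))^2 := by nlinarith
    have h2 : 0 ≤ ν*(ν+E) := by positivity
    nlinarith [sq_nonneg (r - ν*(ν+E))]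
  have hB : r^2 - 2*r*ν^2 ≤ ν^2 := by
    nlinarith [mul_nonneg (sub_pos.mpr hrν).le (sub_nonneg.mpr hrle)]
  have hA : r^2 + ν^2 < 2*r^2*(r-ν) := by
    have h3 : (y^2+2*ν^2) = r^2 + ν^2 := by rw [hr2]; ring
    have h4 : (2*(y^2+ν^2)) = 2*r^2 := by rw [hr2]
    rw [h3, h4] at hg
    have h5 : (r^2+ν^2)/(2*r^2) < r - ν := by linarith
    calc r^2 + ν^2 = ((r^2+ν^2)/(2*r^2)) * (2*r^2) := by field_simp
    _ < (r-ν)*(2*r^2) := by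
        apply mul_lt_mul_of_pos_right h5 (by positivity)
    _ = 2*r^2*(r-ν) := by ring
  have key := core_ineq ν r hν hrν hA hB
  have hy2 : y^2 = r^2 - ν^2 := by rw [hr2]; ring
  have goal2 := subsol' ν r y hν0 hrν hy2 key
  have h3 : (y^2+2*ν^2) = r^2 + ν^2 := by rw [hr2]; ring
  have h4 : ((y^2+ν^2))^2 = (r^2)^2 := by rw [hr2]
  rw [h3, h4, show (2*(y^2+ν^2)) = 2*r^2 from by rw [hr2], show y^2+ν^2 = r^2 from hy2.symm ▸ by ring]
  exact goal2

lemma g_hasDeriv (ν : ℝ) (hν : 0 < ν) (y : ℝ) :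
    HasDerivAt (fun z => Real.sqrt (z^2+ν^2) - (z^2+2*ν^2)/(2*(z^2+ν^2)))
      (y/Real.sqrt (y^2+ν^2) + y*ν^2/(y^2+ν^2)^2) y := by
  have hs : (0:ℝ) < y^2+ν^2 := by positivity
  have h1 : HasDerivAt (fun z:ℝ => z^2+ν^2) (2*y) y := by
    simpa using (hasDerivAt_pow 2 y).add_const (ν^2)
  have h2 : HasDerivAt (fun z => Real.sqrt (z^2+ν^2)) (1/(2*Real.sqrt (y^2+ν^2)) * (2*y)) y :=
    (Real.hasDerivAt_sqrt (ne_of_gt hs)).comp y h1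
  have h3 : HasDerivAt (fun z:ℝ => z^2+2*ν^2) (2*y) y := by
    simpa using (hasDerivAt_pow 2 y).add_const (2*ν^2)
  have h4 : HasDerivAt (fun z:ℝ => 2*(z^2+ν^2)) (2*(2*y)) y := h1.const_mul 2
  have h5 := h3.div h4 (by positivity)
  have h6 := h2.sub h5
  refine h6.congr_deriv ?_
  have hsq : (0:ℝ) < Real.sqrt (y^2+ν^2) := Real.sqrt_pos.mpr hs
  field_simp
  ring

theorem besselI_logDeriv_gronwall_bound (ν : ℝ) (hν : 1 / 2 ≤ ν) (x : ℝ) (hx : 0 < x)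
    (hx2 : x ^ 2 ≤ 2 * ν ^ 3 * (ν + Real.sqrt (ν ^ 2 + 1))) :
    x * deriv (besselI ν) x / besselI ν x >
      Real.sqrt (x ^ 2 + ν ^ 2) - (x ^ 2 + 2 * ν ^ 2) / (2 * (x ^ 2 + ν ^ 2)) := by
  have hν0 : (0:ℝ) < ν := by linarith
  have hfun : besselI ν = bf ν 0 := funext fun z => tsum_congr fun n => by
    rw [pow_zero, one_mul]; rfl
  have hder : deriv (besselI ν) x = bf ν 1 x / x := by
    rw [hfun]; exact (bf_hasDerivAt hν0 0 hx).deriv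
  set g : ℝ → ℝ := fun z => Real.sqrt (z^2+ν^2) - (z^2+2*ν^2)/(2*(z^2+ν^2)) with hgdef
  set U : ℝ → ℝ := fun z => bf ν 1 z / bf ν 0 z with hUdef
  have hI0 : ∀ y:ℝ, 0 < y → 0 < bf ν 0 y := fun y hy => bf0_pos hν0 hy
  have hgoal : x * deriv (besselI ν) x / besselI ν x = U x := by
    rw [hder, hfun, hUdef]
    field_simp
  rw [hgoal]
  show g x < U x
  by_contra hcon
  push_neg at hcon
  have hUgt : ∀ y, 0 < y → ν < U y := by
    intro y hy
    rw [hUdef]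
    rw [lt_div_iff₀ (hI0 y hy)]
    have := bf1_gt hν0 hy
    linarith [this]
  have hUderiv : ∀ y, 0 < y → HasDerivAt U (((y^2+ν^2) - (U y)^2)/y) y := by
    intro y hy
    have h1 := bf_hasDerivAt hν0 0 hy
    have h2 := bf_hasDerivAt hν0 1 hy
    have hd := h2.div h1 (ne_of_gt (hI0 y hy))
    refine hd.congr_deriv ?_
    rw [bf2_eq hν0 hy, hUdef]
    have hb := hI0 y hy
    field_simp
  have hgderiv : ∀ y:ℝ, HasDerivAt g (y/Real.sqrt (y^2+ν^2) + y*ν^2/(y^2+ν^2)^2) y :=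
    fun y => g_hasDeriv ν hν0 y
  -- near zero g < ν
  have hg0 : g 0 < ν := by
    rw [hgdef]
    simp only [ne_eq, OfNat.ofNat_ne_zero, not_false_eq_true, zero_pow, zero_add]
    rw [Real.sqrt_sq hν0.le]
    have : ν^2 ≠ 0 := by positivity
    rw [show (2*ν^2)/(2*ν^2) = 1 by field_simp]
    linarith
  have hev : ∀ᶠ y in 𝓝 (0:ℝ), g y < ν :=
    ((hgderiv 0).continuousAt.tendsto).eventually_lt_const hg0
  obtain ⟨ε, hε, hball⟩ := Metric.eventually_nhds_iff.mp hev
  set δ := min (ε/2) x with hδdef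
  have hδ0 : 0 < δ := lt_min (by linarith) hx
  have hδx : δ ≤ x := min_le_right _ _
  have hsmall : ∀ y, 0 < y → y ≤ δ → g y < ν := by
    intro y hy1 hy2
    apply hball
    rw [Real.dist_eq, sub_zero, abs_of_pos hy1]
    calc y ≤ δ := hy2
    _ ≤ ε/2 := min_le_left _ _
    _ < ε := by linarith
  set S := {y | y ∈ Set.Icc δ x ∧ U y ≤ g y} with hSdef
  have hSx : x ∈ S := ⟨⟨hδx, le_refl x⟩, hcon⟩
  have hSne : S.Nonempty := ⟨x, hSx⟩
  have hSbdd : BddBelow S := ⟨δ, fun y hy => hy.1.1⟩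
  have hSclosed : IsClosed S := by
    have hUc : ContinuousOn (fun y => U y - g y) (Set.Icc δ x) := fun y hy =>
      (((hUderiv y (lt_of_lt_of_le hδ0 hy.1)).sub (hgderiv y)).continuousAt).continuousWithinAt
    have : S = Set.Icc δ x ∩ (fun y => U y - g y) ⁻¹' (Set.Iic 0) := by
      ext y
      simp only [hSdef, Set.mem_setOf_eq, Set.mem_inter_iff, Set.mem_preimage, Set.mem_Iic]
      constructor
      · rintro ⟨h1, h2⟩; exact ⟨h1, by linarith⟩
      · rintro ⟨h1, h2⟩; exact ⟨h1, by linarith⟩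
    rw [this]
    exact hUc.preimage_isClosed_of_isClosed isClosed_Icc isClosed_Iic
  set x1 := sInf S with hx1def
  have hx1S : x1 ∈ S := hSclosed.csInf_mem hSne hSbdd
  have hx1pos : 0 < x1 := lt_of_lt_of_le hδ0 hx1S.1.1
  have hx1x : x1 ≤ x := hx1S.1.2
  have hleft : ∀ y, 0 < y → y < x1 → g y < U y := by
    intro y hy0 hyx1
    rcases le_or_gt y δ with h | h
    · exact lt_trans (hsmall y hy0 h) (hUgt y hy0)
    · by_contra hcc; push_neg at hcc
      have hyS : y ∈ S := ⟨⟨h.le, le_trans hyx1.le hx1x⟩, hcc⟩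
      exact absurd (csInf_le hSbdd hyS) (not_le.mpr hyx1)
  have hUx1 : U x1 = g x1 := by
    refine le_antisymm hx1S.2 ?_
    have hlim : Filter.Tendsto (fun y => U y - g y) (𝓝[<] x1) (𝓝 (U x1 - g x1)) :=
      (((hUderiv x1 hx1pos).sub (hgderiv x1)).continuousAt.tendsto).mono_left nhdsWithin_le_nhds
    have hge : 0 ≤ U x1 - g x1 := by
      refine ge_of_tendsto hlim ?_
      have hev0 : ∀ᶠ y in 𝓝[<] x1, 0 < y :=
        eventually_nhdsWithin_of_eventually_nhds (eventually_gt_nhds hx1pos)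
      filter_upwards [hev0, self_mem_nhdsWithin] with y hy0 hyx1
      exact sub_nonneg.mpr (hleft y hy0 hyx1).le
    linarith
  have hgν : ν < g x1 := hUx1 ▸ hUgt x1 hx1pos
  have hb1 : x1^2 ≤ 2*ν^3*(ν+Real.sqrt (ν^2+1)) := by
    refine le_trans ?_ hx2
    nlinarith
  have hsub : x1*(x1/Real.sqrt (x1^2+ν^2) + x1*ν^2/((x1^2+ν^2))^2)
      < (x1^2+ν^2) - (Real.sqrt (x1^2+ν^2) - (x1^2+2*ν^2)/(2*(x1^2+ν^2)))^2 :=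
    subsol ν x1 hν hx1pos hb1 hgν
  set d := ((x1^2+ν^2) - (U x1)^2)/x1 - (x1/Real.sqrt (x1^2+ν^2) + x1*ν^2/(x1^2+ν^2)^2) with hd
  have hdpos : 0 < d := by
    rw [hd, hUx1]
    have hgx1 : g x1 = Real.sqrt (x1^2+ν^2) - (x1^2+2*ν^2)/(2*(x1^2+ν^2)) := rfl
    rw [hgx1]
    rw [sub_pos, lt_div_iff₀ hx1pos]
    nlinarith [hsub]
  have hD : HasDerivAt (fun y => U y - g y) d x1 := (hUderiv x1 hx1pos).sub (hgderiv x1)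
  have hslope := hD.hasDerivWithinAt (s := Set.Iio x1)
  rw [hasDerivWithinAt_iff_tendsto_slope] at hslope
  have hdiff : Set.Iio x1 \ {x1} = Set.Iio x1 := by
    ext z; simp only [Set.mem_diff, Set.mem_Iio, Set.mem_singleton_iff]
    exact ⟨fun h => h.1, fun h => ⟨h, ne_of_lt h⟩⟩
  rw [hdiff] at hslope
  have hd_nonpos : d ≤ 0 := by
    refine le_of_tendsto hslope ?_
    have hev0 : ∀ᶠ y in 𝓝[<] x1, 0 < y :=
      eventually_nhdsWithin_of_eventually_nhds (eventually_gt_nhds hx1pos)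
    filter_upwards [hev0, self_mem_nhdsWithin] with y hy0 hyx1
    rw [slope_def_field]
    apply div_nonpos_of_nonneg_of_nonpos
    · have h1 := hleft y hy0 hyx1
      have h2 : U x1 - g x1 = 0 := by rw [hUx1]; ring
      rw [h2]; linarith
    · have : y < x1 := hyx1
      linarith
  linarith
end
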